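/- arXiv:2002.03053 — 6 statements merged into one kernel-verified Lean document; each statement's English description precedes it below -/
import Mathlib

section
/- Let X be a real Hilbert space and let F : X → ℝ be convex and Fréchet differentiable with L-Lipschitz gradient, and additionally γ-strongly convex for some γ ≥ 0. Then for every β > 0 and all x̄, z, x ∈ X one has ⟨∇F(z), x − x̄⟩ ≥ F(x) − F(x̄) + ((γ − βL²)/2)·‖x − x̄‖² − (1/(2β))·‖x − z‖². -/
open scoped InnerProductSpace

lemma convex_deriv_le {X : Type*} [NormedAddCommGroup X] [InnerProductSpace ℝ X]
    (G : X → ℝ) (a b : X) (d : ℝ)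
    (hc : ConvexOn ℝ Set.univ G)
    (hd : HasDerivAt (fun t : ℝ => G (a + t • (b - a))) d 0) :
    G a + d ≤ G b := by
  have hcomp : ConvexOn ℝ Set.univ (fun t : ℝ => G (a + t • (b - a))) := by
    have h := hc.comp_affineMap (AffineMap.lineMap a b)
    simp only [Set.preimage_univ] at h
    have he : (fun t : ℝ => G (a + t • (b - a))) = G ∘ ⇑(AffineMap.lineMap a b) := by
      funext t
      simp only [Function.comp_apply]
      rw [AffineMap.lineMap_apply, vsub_eq_sub, vadd_eq_add]
      rw [add_comm]
    rw [he]; exact h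
  have hle := hcomp.le_slope_of_hasDerivAt (Set.mem_univ (0:ℝ)) (Set.mem_univ (1:ℝ)) one_pos hd
  simp only [slope_def_field] at hle
  have h0 : a + (0:ℝ) • (b - a) = a := by simp
  have h1 : a + (1:ℝ) • (b - a) = b := by simp
  rw [h0, h1] at hle
  norm_num at hle
  linarith [hle]

lemma sc_grad_ineq {X : Type*} [NormedAddCommGroup X] [InnerProductSpace ℝ X] [CompleteSpace X]
    (F : X → ℝ) (F' : X → X) (γ : ℝ)
    (hFgrad : ∀ w : X, HasGradientAt F (F' w) w)
    (hFsc : ConvexOn ℝ Set.univ (fun w => F w - γ / 2 * ‖w‖ ^ 2))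
    (a b : X) :
    F a - F b + γ / 2 * ‖a - b‖ ^ 2 ≤ ⟪F' a, a - b⟫_ℝ := by
  set c : ℝ → X := fun t => a + t • (b - a) with hc
  have hline : HasDerivAt c (b - a) 0 := by
    simpa [hc] using ((hasDerivAt_id (0:ℝ)).smul_const (b - a)).const_add a
  have hc0 : c 0 = a := by simp [hc]
  have hF : HasDerivAt (fun t => F (c t)) ⟪F' a, b - a⟫_ℝ 0 := by
    have h := (hFgrad a).hasFDerivAt
    have h' : HasFDerivAt F ((InnerProductSpace.toDual ℝ X) (F' a)) (c 0) := by rwa [hc0]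
    have := h'.comp_hasDerivAt 0 hline
    simp at this; exact this
  have hn : HasDerivAt (fun t => ⟪c t, c t⟫_ℝ)
      (⟪c 0, b - a⟫_ℝ + ⟪b - a, c 0⟫_ℝ) 0 := HasDerivAt.inner (𝕜 := ℝ) hline hline
  have hG : HasDerivAt (fun t => F (c t) - γ / 2 * ⟪c t, c t⟫_ℝ)
      (⟪F' a, b - a⟫_ℝ - γ / 2 * (⟪c 0, b - a⟫_ℝ + ⟪b - a, c 0⟫_ℝ)) 0 :=
    hF.sub (hn.const_mul (γ / 2))
  rw [hc0] at hG
  have hG' : HasDerivAt (fun t : ℝ => F (c t) - γ / 2 * ‖c t‖ ^ 2)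
      (⟪F' a, b - a⟫_ℝ - γ / 2 * (⟪a, b - a⟫_ℝ + ⟪b - a, a⟫_ℝ)) 0 := by
    have he : (fun t : ℝ => F (c t) - γ / 2 * ‖c t‖ ^ 2)
        = fun t : ℝ => F (c t) - γ / 2 * ⟪c t, c t⟫_ℝ := by
      funext t; rw [real_inner_self_eq_norm_sq]
    rw [he]; exact hG
  have key := convex_deriv_le (fun w => F w - γ / 2 * ‖w‖ ^ 2) a b _ hFsc hG'
  have e1 : ⟪F' a, a - b⟫_ℝ = -⟪F' a, b - a⟫_ℝ := by
    rw [← inner_neg_right]; congr 1; abel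
  have e2 : ⟪a, b - a⟫_ℝ = ⟪a, b⟫_ℝ - ‖a‖ ^ 2 := by
    rw [inner_sub_right, real_inner_self_eq_norm_sq]
  have e3 : ⟪b - a, a⟫_ℝ = ⟪a, b⟫_ℝ - ‖a‖ ^ 2 := by
    rw [inner_sub_left, real_inner_self_eq_norm_sq, real_inner_comm]
  have e4 : ‖a - b‖ ^ 2 = ‖a‖ ^ 2 - 2 * ⟪a, b⟫_ℝ + ‖b‖ ^ 2 := by
    rw [← real_inner_self_eq_norm_sq, inner_sub_sub_self]
    rw [real_inner_self_eq_norm_sq, real_inner_self_eq_norm_sq, real_inner_comm]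
    ring
  rw [e1, e4]
  rw [e2, e3] at key
  linarith [key]

/-- **Smoothness three-point inequality under strong convexity** (Lemma 2.3, second part):
for `γ`-strongly convex `F` with `L`-Lipschitz gradient and any `β > 0`,
`⟨∇F(z), x − x̄⟩ ≥ F(x) − F(x̄) + ((γ − βL²)/2)‖x − x̄‖² − (1/(2β))‖x − z‖²`. -/
theorem smoothness_three_point_strongly_convex
    {X : Type*} [NormedAddCommGroup X] [InnerProductSpace ℝ X] [CompleteSpace X]
    (F : X → ℝ) (F' : X → X) (L γ : ℝ) (hL : 0 ≤ L) (hγ : 0 ≤ γ)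
    (hFconv : ConvexOn ℝ Set.univ F)
    (hFgrad : ∀ w : X, HasGradientAt F (F' w) w)
    (hFlip : ∀ w w' : X, ‖F' w - F' w'‖ ≤ L * ‖w - w'‖)
    (hFsc : ConvexOn ℝ Set.univ (fun w => F w - γ / 2 * ‖w‖ ^ 2))
    (β : ℝ) (hβ : 0 < β)
    (xbar z x : X) :
    ⟪F' z, x - xbar⟫_ℝ ≥
      F x - F xbar + (γ - β * L ^ 2) / 2 * ‖x - xbar‖ ^ 2 - 1 / (2 * β) * ‖x - z‖ ^ 2 := by
  set A := ‖x - z‖ with hA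
  set B := ‖x - xbar‖ with hB
  have hsc := sc_grad_ineq F F' γ hFgrad hFsc x xbar
  have hsplit : ⟪F' z, x - xbar⟫_ℝ = ⟪F' x, x - xbar⟫_ℝ + ⟪F' z - F' x, x - xbar⟫_ℝ := by
    rw [inner_sub_left]; ring
  have hcs : |⟪F' z - F' x, x - xbar⟫_ℝ| ≤ ‖F' z - F' x‖ * B := abs_real_inner_le_norm _ _
  have hlipzx : ‖F' z - F' x‖ ≤ L * A := by
    calc ‖F' z - F' x‖ ≤ L * ‖z - x‖ := hFlip z x
    _ = L * A := by rw [hA, norm_sub_rev]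
  have hBnn : (0:ℝ) ≤ B := norm_nonneg _
  have hlow : ⟪F' z - F' x, x - xbar⟫_ℝ ≥ -(L * A * B) := by
    have h1 : -(‖F' z - F' x‖ * B) ≤ ⟪F' z - F' x, x - xbar⟫_ℝ := neg_le_of_abs_le hcs
    have h2 : ‖F' z - F' x‖ * B ≤ L * A * B := mul_le_mul_of_nonneg_right hlipzx hBnn
    linarith
  have h5 : L * A * B ≤ 1 / (2 * β) * A ^ 2 + β * L ^ 2 / 2 * B ^ 2 := by
    rw [← sub_nonneg]
    have key : 1 / (2 * β) * A ^ 2 + β * L ^ 2 / 2 * B ^ 2 - L * A * B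
        = (1 / (2 * β)) * (A - β * L * B) ^ 2 := by
      field_simp; ring
    rw [key]; positivity
  have hexp : (γ - β * L ^ 2) / 2 * B ^ 2 = γ / 2 * B ^ 2 - β * L ^ 2 / 2 * B ^ 2 := by ring
  rw [ge_iff_le, hsplit, hexp]
  linarith
end

section
/- Let X be a real Hilbert space, F : X → ℝ convex and Fréchet differentiable with L-Lipschitz gradient and γ_F-strongly convex (γ_F ≥ 0), and G : X → (−∞,∞] convex, proper, lower semicontinuous, and γ_G-strongly convex (γ_G ≥ 0). Let τ > 0 and ζ ∈ (0,1]. Define γ := γ_G + γ_F − τζ⁻¹L² if γ_F > 0, and γ := γ_G if γ_F = 0, in which case assume additionally that τL ≤ ζ; assume γ ≥ 0. Set J := F + G. Then for all x, z, x̄ ∈ X and every subgradient q ∈ ∂G(x): ⟨q + ∇F(z), x − x̄⟩ ≥ J(x) − J(x̄) + (γ/2)·‖x − x̄‖² − (ζ/(2τ))·‖x − z‖². -/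
open scoped InnerProductSpace

set_option maxHeartbeats 1000000

/-- Convexity for extended-real-valued functions. -/
def EConvexOn {Z : Type*} [AddCommGroup Z] [Module ℝ Z] (f : Z → EReal) : Prop :=
  ∀ u v : Z, ∀ a b : ℝ, 0 ≤ a → 0 ≤ b → a + b = 1 →
    f (a • u + b • v) ≤ (a : EReal) * f u + (b : EReal) * f v

section Helpers

open Filter Set Topology

variable {X : Type*} [NormedAddCommGroup X] [InnerProductSpace ℝ X] [CompleteSpace X]



/-- First-order inequality for a convex differentiable function. -/
lemma grad_convex_le (H : X → ℝ) (g a b : X)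
    (hconv : ConvexOn ℝ Set.univ H) (hgrad : HasGradientAt H g a) :
    H a + ⟪g, b - a⟫_ℝ ≤ H b := by
  set v := b - a with hv
  have hline : HasDerivAt (fun t : ℝ => a + t • v) v 0 :=
    by simpa using ((hasDerivAt_id (0:ℝ)).smul_const v).const_add a
  have h0 : a + (0:ℝ) • v = a := by simp
  have hφ : HasDerivAt (fun t : ℝ => H (a + t • v)) ⟪g, v⟫_ℝ 0 := by
    have hf : HasFDerivAt H (InnerProductSpace.toDual ℝ X g) (a + (0:ℝ) • v) := by
      rw [h0]; exact hgrad.hasFDerivAt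
    have := hf.comp_hasDerivAt 0 hline; simp at this; exact this
  have hslope : Tendsto (slope (fun t : ℝ => H (a + t • v)) 0) (𝓝[>] 0) (𝓝 ⟪g, v⟫_ℝ) :=
    (hasDerivAt_iff_tendsto_slope.mp hφ).mono_left
      (nhdsWithin_mono _ (fun t ht => ne_of_gt ht))
  have hev : ∀ᶠ t in 𝓝[>] (0:ℝ), slope (fun t : ℝ => H (a + t • v)) 0 t ≤ H b - H a := by
    filter_upwards [Ioo_mem_nhdsGT_of_mem (by norm_num : (0:ℝ) ∈ Set.Ico 0 1)] with t ht
    have hcomb : a + t • v = (1 - t) • a + t • b := by rw [hv]; module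
    have hc := hconv.2 (Set.mem_univ a) (Set.mem_univ b)
      (by linarith [ht.2] : (0:ℝ) ≤ 1 - t) (le_of_lt ht.1) (by ring)
    rw [slope_def_field, h0, hcomb]
    rw [div_le_iff₀ (by linarith [ht.1] : (0:ℝ) < t - 0)]
    have := hc
    simp only [smul_eq_mul] at this
    nlinarith [this]
  have := le_of_tendsto hslope hev
  linarith



lemma hasGradientAt_half_sq (c : ℝ) (a : X) :
    HasGradientAt (fun w : X => c / 2 * ‖w‖ ^ 2) (c • a) a := by
  rw [hasGradientAt_iff_hasFDerivAt]
  have h1 : HasFDerivAt (fun w : X => ⟪w, w⟫_ℝ)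
      ((fderivInnerCLM ℝ (a, a)).comp
        ((ContinuousLinearMap.id ℝ X).prod (ContinuousLinearMap.id ℝ X))) a :=
    (hasFDerivAt_id a).inner ℝ (hasFDerivAt_id a)
  have h2 := h1.const_mul (c / 2)
  have heq : (fun w : X => c / 2 * ⟪w, w⟫_ℝ) = fun w : X => c / 2 * ‖w‖ ^ 2 := by
    funext w; rw [real_inner_self_eq_norm_sq]
  rw [heq] at h2
  refine h2.congr_fderiv ?_
  ext y
  simp [fderivInnerCLM_apply, InnerProductSpace.toDual_apply_apply, real_inner_smul_left,
    real_inner_comm]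
  ring

lemma descent_lemma (F : X → ℝ) (F' : X → X) (L : ℝ) (hL : 0 ≤ L)
    (hFgrad : ∀ w, HasGradientAt F (F' w) w)
    (hFlip : ∀ w w', ‖F' w - F' w'‖ ≤ L * ‖w - w'‖) (a b : X) :
    F b ≤ F a + ⟪F' a, b - a⟫_ℝ + L / 2 * ‖b - a‖ ^ 2 := by
  set v := b - a with hv
  have hφ : ∀ t : ℝ, HasDerivAt (fun t : ℝ => F (a + t • v)) ⟪F' (a + t • v), v⟫_ℝ t := by
    intro t
    have hline : HasDerivAt (fun t : ℝ => a + t • v) v t := by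
      simpa using ((hasDerivAt_id t).smul_const v).const_add a
    have := (hFgrad (a + t • v)).hasFDerivAt.comp_hasDerivAt t hline; simp at this; exact this
  set ψ : ℝ → ℝ := fun t => L / 2 * ‖v‖ ^ 2 * t ^ 2 - (F (a + t • v) - t * ⟪F' a, v⟫_ℝ) with hψdef
  have hψ : ∀ t : ℝ, HasDerivAt ψ
      (L * ‖v‖ ^ 2 * t - (⟪F' (a + t • v), v⟫_ℝ - ⟪F' a, v⟫_ℝ)) t := by
    intro t
    have h1 : HasDerivAt (fun t : ℝ => L / 2 * ‖v‖ ^ 2 * t ^ 2) (L * ‖v‖ ^ 2 * t) t := by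
      have := (hasDerivAt_pow 2 t).const_mul (L / 2 * ‖v‖ ^ 2)
      refine this.congr_deriv ?_
      ring
    exact h1.sub ((hφ t).sub (by simpa using (hasDerivAt_id t).mul_const (⟪F' a, v⟫_ℝ)))
  have hmono : MonotoneOn ψ (Set.Icc (0:ℝ) 1) := by
    apply monotoneOn_of_deriv_nonneg (convex_Icc 0 1)
    · exact (Differentiable.continuous (fun t => (hψ t).differentiableAt)).continuousOn
    · exact fun t _ => (hψ t).differentiableAt.differentiableWithinAt
    · intro t ht
      rw [interior_Icc] at ht
      rw [(hψ t).deriv]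
      have h2 : ⟪F' (a + t • v) - F' a, v⟫_ℝ ≤ ‖F' (a + t • v) - F' a‖ * ‖v‖ :=
        real_inner_le_norm _ _
      have h3 : ‖F' (a + t • v) - F' a‖ ≤ L * ‖t • v‖ := by
        simpa using hFlip (a + t • v) a
      rw [norm_smul, Real.norm_eq_abs, abs_of_pos ht.1] at h3
      rw [inner_sub_left] at h2
      nlinarith [norm_nonneg v, norm_nonneg (F' (a + t • v) - F' a), ht.1.le]
  have h01 := hmono (Set.left_mem_Icc.mpr zero_le_one) (Set.right_mem_Icc.mpr zero_le_one)
    zero_le_one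
  have e0 : ψ 0 = -F a := by simp [hψdef]
  have e1 : ψ 1 = L / 2 * ‖v‖ ^ 2 - (F b - ⟪F' a, v⟫_ℝ) := by
    simp [hψdef, hv]
  rw [e0, e1] at h01
  linarith

lemma strong_subgrad (G : X → EReal) (γG : ℝ) (hγG : 0 ≤ γG)
    (hGsc : EConvexOn (fun w => G w - ((γG / 2 * ‖w‖ ^ 2 : ℝ) : EReal)))
    (x xbar q : X) (gx gbar : ℝ) (hgx : G x = (gx : EReal)) (hgbar : G xbar = (gbar : EReal))
    (hq : ∀ w : X, G x + ((⟪q, w - x⟫_ℝ : ℝ) : EReal) ≤ G w) :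
    ⟪q, xbar - x⟫_ℝ ≤ gbar - gx - γG / 2 * ‖x - xbar‖ ^ 2 := by
  have key : ∀ t : ℝ, t ∈ Set.Ioo (0:ℝ) 1 →
      ⟪q, xbar - x⟫_ℝ ≤ gbar - gx - γG / 2 * (1 - t) * ‖x - xbar‖ ^ 2 := by
    intro t ht
    set xt := (1 - t) • x + t • xbar with hxt
    have hsc := hGsc x xbar (1 - t) t (by linarith [ht.2]) ht.1.le (by ring)
    simp only [hgx, hgbar] at hsc
    have h1 := hq xt
    rw [hgx] at h1
    have h2 : ((gx : EReal) + ((⟪q, xt - x⟫_ℝ : ℝ) : EReal)) - ((γG / 2 * ‖xt‖ ^ 2 : ℝ) : EReal)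
        ≤ ((1 - t : ℝ) : EReal) * ((gx : EReal) - ((γG / 2 * ‖x‖ ^ 2 : ℝ) : EReal))
          + ((t : ℝ) : EReal) * ((gbar : EReal) - ((γG / 2 * ‖xbar‖ ^ 2 : ℝ) : EReal)) :=
      le_trans (EReal.sub_le_sub h1 le_rfl) hsc
    have h3 : gx + ⟪q, xt - x⟫_ℝ - γG / 2 * ‖xt‖ ^ 2
        ≤ (1 - t) * (gx - γG / 2 * ‖x‖ ^ 2) + t * (gbar - γG / 2 * ‖xbar‖ ^ 2) := by
      exact_mod_cast h2
    have hs : ⟪q, xt - x⟫_ℝ = t * ⟪q, xbar - x⟫_ℝ := by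
      have hxx : xt - x = t • (xbar - x) := by rw [hxt]; module
      rw [hxx, real_inner_smul_right]
    have hnt : ‖xt‖ ^ 2 = (1 - t) ^ 2 * ‖x‖ ^ 2 + 2 * ((1 - t) * t) * ⟪x, xbar⟫_ℝ
        + t ^ 2 * ‖xbar‖ ^ 2 := by
      rw [hxt, norm_add_sq_real, real_inner_smul_left, real_inner_smul_right, norm_smul,
        norm_smul, mul_pow, mul_pow, Real.norm_eq_abs, Real.norm_eq_abs, sq_abs, sq_abs]
      ring
    have hb : ‖x - xbar‖ ^ 2 = ‖x‖ ^ 2 - 2 * ⟪x, xbar⟫_ℝ + ‖xbar‖ ^ 2 := norm_sub_sq_real x xbar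
    rw [hs, hnt] at h3
    have h4 : t * ⟪q, xbar - x⟫_ℝ ≤ t * (gbar - gx - γG / 2 * (1 - t) * ‖x - xbar‖ ^ 2) := by
      rw [hb]; nlinarith [h3]
    exact (mul_le_mul_iff_right₀ ht.1).mp h4
  refine le_of_forall_pos_le_add (fun ε hε => ?_)
  set K := γG / 2 * ‖x - xbar‖ ^ 2 with hK
  have hK0 : 0 ≤ K := by positivity
  set t := min (ε / (K + 1)) (1/2) with htd
  have ht : t ∈ Set.Ioo (0:ℝ) 1 :=
    ⟨lt_min (by positivity) (by norm_num), lt_of_le_of_lt (min_le_right _ _) (by norm_num)⟩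
  have h5 := key t ht
  have h6 : K * t ≤ K * (ε / (K + 1)) := mul_le_mul_of_nonneg_left (min_le_left _ _) hK0
  have h7 : K * (ε / (K + 1)) ≤ ε := by
    rw [mul_div_assoc', div_le_iff₀ (by positivity)]
    nlinarith
  have hKe : γG / 2 * (1 - t) * ‖x - xbar‖ ^ 2 = K - K * t := by rw [hK]; ring
  linarith

end Helpers

/-- **Forward–backward three-point estimate** (Lemma 2.4): for `F` smooth
(`L`-Lipschitz gradient, `γ_F`-strongly convex) and `G` convex, proper,
lower semicontinuous and `γ_G`-strongly convex, with `γ` defined case-wise,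
`⟨q + ∇F(z), x − x̄⟩ ≥ J(x) − J(x̄) + (γ/2)‖x − x̄‖² − (ζ/(2τ))‖x − z‖²`
for every `q ∈ ∂G(x)`, where `J := F + G`. -/
theorem fb_three_point_estimate
    {X : Type*} [NormedAddCommGroup X] [InnerProductSpace ℝ X] [CompleteSpace X]
    (F : X → ℝ) (F' : X → X) (G : X → EReal)
    (L γF γG τ ζ : ℝ)
    (hL : 0 ≤ L) (hγF : 0 ≤ γF) (hγG : 0 ≤ γG)
    (hτ : 0 < τ) (hζ : 0 < ζ ∧ ζ ≤ 1)
    (hFconv : ConvexOn ℝ Set.univ F)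
    (hFgrad : ∀ w : X, HasGradientAt F (F' w) w)
    (hFlip : ∀ w w' : X, ‖F' w - F' w'‖ ≤ L * ‖w - w'‖)
    (hFsc : ConvexOn ℝ Set.univ (fun w => F w - γF / 2 * ‖w‖ ^ 2))
    (hGconv : EConvexOn G)
    (hGproper : (∀ w, G w ≠ ⊥) ∧ ∃ w, G w ≠ ⊤)
    (hGlsc : LowerSemicontinuous G)
    (hGsc : EConvexOn (fun w => G w - ((γG / 2 * ‖w‖ ^ 2 : ℝ) : EReal)))
    (γ : ℝ)
    (hγdef : γ = if 0 < γF then γG + γF - τ * ζ⁻¹ * L ^ 2 else γG)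
    (hγcase : γF = 0 → τ * L ≤ ζ)
    (hγ : 0 ≤ γ)
    (x z xbar : X) (q : X)
    (hq : ∀ w : X, G x + ((⟪q, w - x⟫_ℝ : ℝ) : EReal) ≤ G w) :
    ((⟪q + F' z, x - xbar⟫_ℝ : ℝ) : EReal) ≥
      (((F x : ℝ) : EReal) + G x) - (((F xbar : ℝ) : EReal) + G xbar)
        + ((γ / 2 * ‖x - xbar‖ ^ 2 - ζ / (2 * τ) * ‖x - z‖ ^ 2 : ℝ) : EReal) := by
  obtain ⟨hζ0, hζ1⟩ := hζ
  obtain ⟨hGbot, w0, hw0⟩ := hGproper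
  have hxne : G x ≠ ⊤ := by
    intro h
    apply hw0
    have h1 := hq w0
    rw [h, EReal.top_add_coe] at h1
    exact top_le_iff.mp h1
  have hgx : G x = (((G x).toReal : ℝ) : EReal) := (EReal.coe_toReal hxne (hGbot x)).symm
  set gx := (G x).toReal with hgxd
  by_cases hbar : G xbar = ⊤
  · rw [hbar, hgx]
    rw [EReal.coe_add_top, EReal.sub_top, EReal.bot_add]
    exact bot_le
  · have hgbar : G xbar = (((G xbar).toReal : ℝ) : EReal) :=
      (EReal.coe_toReal hbar (hGbot xbar)).symm
    set gbar := (G xbar).toReal with hgbard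
    -- key real facts
    set b2 := ‖x - xbar‖ ^ 2 with hb2
    set a2 := ‖x - z‖ ^ 2 with ha2
    have hG : ⟪q, xbar - x⟫_ℝ ≤ gbar - gx - γG / 2 * b2 :=
      strong_subgrad G γG hγG hGsc x xbar q gx gbar hgx hgbar hq
    have hqneg : ⟪q, x - xbar⟫_ℝ = -⟪q, xbar - x⟫_ℝ := by
      rw [← neg_sub xbar x, inner_neg_right]
    have hsum : ⟪q + F' z, x - xbar⟫_ℝ = ⟪q, x - xbar⟫_ℝ + ⟪F' z, x - xbar⟫_ℝ :=
      inner_add_left _ _ _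
    have hb : b2 = ‖x‖ ^ 2 - 2 * ⟪x, xbar⟫_ℝ + ‖xbar‖ ^ 2 := norm_sub_sq_real x xbar
    have hFpart : ⟪F' z, x - xbar⟫_ℝ ≥ F x - F xbar + (γ - γG) / 2 * b2 - ζ / (2 * τ) * a2 := by
      rcases lt_or_eq_of_le hγF with hpos | hzero
      · -- γF > 0
        have hγ' : γ = γG + γF - τ * ζ⁻¹ * L ^ 2 := by rw [hγdef, if_pos hpos]
        have hH : HasGradientAt (fun w => F w - γF / 2 * ‖w‖ ^ 2) (F' x - γF • x) x := by
          rw [hasGradientAt_iff_hasFDerivAt]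
          have h5 := ((hFgrad x).hasFDerivAt.sub (hasGradientAt_half_sq γF x).hasFDerivAt)
          rw [map_sub]
          exact h5
        have hA := grad_convex_le _ _ x xbar hFsc hH
        rw [inner_sub_left, real_inner_smul_left, inner_sub_right, inner_sub_right,
          real_inner_self_eq_norm_sq] at hA
        have hFx : ⟪F' x, x - xbar⟫_ℝ ≥ F x - F xbar + γF / 2 * b2 := by
          have h6 : ⟪F' x, x - xbar⟫_ℝ = ⟪F' x, x⟫_ℝ - ⟪F' x, xbar⟫_ℝ := inner_sub_right _ _ _
          rw [h6]
          nlinarith [hA, hb]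
        have hsplit : ⟪F' z, x - xbar⟫_ℝ = ⟪F' x, x - xbar⟫_ℝ - ⟪F' x - F' z, x - xbar⟫_ℝ := by
          rw [inner_sub_left]; ring
        have hcs : ⟪F' x - F' z, x - xbar⟫_ℝ ≤ L * ‖x - z‖ * ‖x - xbar‖ := by
          calc ⟪F' x - F' z, x - xbar⟫_ℝ ≤ ‖F' x - F' z‖ * ‖x - xbar‖ := real_inner_le_norm _ _
            _ ≤ L * ‖x - z‖ * ‖x - xbar‖ := by
                have := hFlip x z
                nlinarith [norm_nonneg (x - xbar)]
        have hamgm : L * ‖x - z‖ * ‖x - xbar‖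
            ≤ τ * ζ⁻¹ * L ^ 2 / 2 * b2 + ζ / (2 * τ) * a2 := by
          have key2 : 2 * τ * ζ * (τ * ζ⁻¹ * L ^ 2 / 2 * b2 + ζ / (2 * τ) * a2
              - L * ‖x - z‖ * ‖x - xbar‖)
              = (τ * L * ‖x - xbar‖ - ζ * ‖x - z‖) ^ 2 := by
            rw [hb2, ha2]; field_simp; ring
          nlinarith [key2, sq_nonneg (τ * L * ‖x - xbar‖ - ζ * ‖x - z‖),
            mul_pos (mul_pos two_pos hτ) hζ0]
        have hγb : (γ - γG) / 2 * b2 = γF / 2 * b2 - τ * ζ⁻¹ * L ^ 2 / 2 * b2 := by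
          rw [hγ']; ring
        linarith
      · -- γF = 0
        have hγ' : γ = γG := by rw [hγdef, if_neg (by rw [← hzero]; exact lt_irrefl 0)]
        have hτL := hγcase hzero.symm
        have hA2 := grad_convex_le F (F' z) z xbar hFconv (hFgrad z)
        have hB := descent_lemma F F' L hL hFgrad hFlip z x
        have hsplit : ⟪F' z, x - xbar⟫_ℝ = ⟪F' z, x - z⟫_ℝ - ⟪F' z, xbar - z⟫_ℝ := by
          rw [← inner_sub_right]
          congr 1
          abel
        have hcoef : L / 2 * ‖x - z‖ ^ 2 ≤ ζ / (2 * τ) * ‖x - z‖ ^ 2 := by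
          have h7 : L / 2 ≤ ζ / (2 * τ) := by
            rw [div_le_div_iff₀ (by norm_num) (by positivity)]
            nlinarith
          nlinarith [sq_nonneg ‖x - z‖]
        have hγb : (γ - γG) / 2 * b2 = 0 := by rw [hγ']; ring
        rw [hγb, ha2]
        linarith
    have hfinal : (F x + gx) - (F xbar + gbar) + (γ / 2 * b2 - ζ / (2 * τ) * a2)
        ≤ ⟪q + F' z, x - xbar⟫_ℝ := by
      rw [hsum, hqneg]
      linarith
    rw [hgx, hgbar, ge_iff_le]
    exact_mod_cast hfinal
end

section
/- Predictive online forward–backward splitting regret estimate. For each k ∈ ℕ let X_k be a real Hilbert space, F_k : X_k → ℝ convex, Fréchet differentiable with L_k-Lipschitz gradient and γ_{F_k}-strongly convex (γ_{F_k} ≥ 0), and G_k : X_k → (−∞,∞] convex, proper, lower semicontinuous and γ_{G_k}-strongly convex (γ_{G_k} ≥ 0); set J_k := F_k + G_k. Let τ_k > 0 and ζ_k ∈ (0,1] and define γ_k := γ_{G_k} + γ_{F_k} − τ_k ζ_k⁻¹ L_k² if γ_{F_k} > 0, and γ_k := γ_{G_k} if γ_{F_k} = 0, in which case assume additionally τ_k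 L_k ≤ ζ_k; assume γ_k ≥ 0 for all k. Let A_k : X_k → X_{k+1} be predictors and 𝓑 ⊂ ∏_{k≥0} X_k a bounded comparison set such that, with x^0 ∈ X_0 given and the iterates defined by z^{k+1} := A_k(x^k) and x^{k+1} := prox_{τ_{k+1} G_{k+1}}(z^{k+1} − τ_{k+1} ∇F_{k+1}(z^{k+1})), the prediction bound (1/2)‖A_k(x^k) − x̄^{k+1}‖² ≤ (Λ_k/2)‖x^k − x̄^k‖² + ε_{k+1} holds for some Λ_k > 0 and ε_{k+1} ∈ ℝ, for every x̄^{0:∞} ∈ 𝓑 and every k ∈ ℕ. Suppose nonnegative testing parameters {φ_k} satisfy φ_{k+1} ≤ φ_k(1 + γ_k τ_k) Λ_k⁻¹ for k = 0,…,N−1. Then sup over x̄^{1:N} ∈ 𝓑_{1:N} of Σ_{k=1}^{N} φ_k τ_k [J_k(x^k) − J_k(x̄^k)], plus Σ_{k=0}^{N−1} (φ_{k+1}(1 − ζ_{k+1})/2)·‖x^{k+1} − A_k(x^k)‖², is at most sup over x̄^0 ∈ 𝓑_0 of (φ_0(1 + γ_0 τ_0)/2)·‖x^0 − x̄^0‖²,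 plus Σ_{k=1}^{N} ε_k φ_k. -/
open scoped InnerProductSpace

/-- `p = prox_{τG}(v)`, i.e. `p` minimises `w ↦ τ G(w) + ½‖w − v‖²`. -/
def IsProx {Z : Type*} [NormedAddCommGroup Z] [InnerProductSpace ℝ Z]
    (G : Z → EReal) (τ : ℝ) (v p : Z) : Prop :=
  ∀ w : Z, (τ : EReal) * G p + ((1 / 2 * ‖p - v‖ ^ 2 : ℝ) : EReal) ≤
    (τ : EReal) * G w + ((1 / 2 * ‖w - v‖ ^ 2 : ℝ) : EReal)

section Auxiliary

open Set

lemma pofb_slope_aux {φ : ℝ → ℝ} {c : ℝ}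
    (hb : ∀ t ∈ Set.Ioc (0:ℝ) 1, φ t ≤ (1 - t) * φ 0 + t * φ 1)
    (hd : HasDerivAt φ c 0) : φ 0 + c ≤ φ 1 := by
  have hs : Filter.Tendsto (slope φ 0) (nhdsWithin 0 (Set.Ioi 0)) (nhds c) :=
    (hasDerivAt_iff_tendsto_slope.mp hd).mono_left
      (nhdsWithin_mono _ (fun t ht => by simpa using (ne_of_gt ht)))
  have hle : c ≤ φ 1 - φ 0 := by
    refine le_of_tendsto hs ?_
    filter_upwards [Ioc_mem_nhdsGT_of_mem (by norm_num : (0:ℝ) ∈ Set.Ico 0 1)] with t ht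
    have h1 := hb t ht
    have ht0 : 0 < t := ht.1
    rw [slope_def_field, sub_zero, div_le_iff₀ ht0]
    nlinarith
  linarith

variable {E : Type*} [NormedAddCommGroup E] [InnerProductSpace ℝ E] [CompleteSpace E]

omit [CompleteSpace E] in
lemma pofb_line_hasDerivAt (x d : E) (t : ℝ) :
    HasDerivAt (fun s : ℝ => x + s • d) d t := by
  simpa using ((hasDerivAt_id t).smul_const d).const_add x

lemma pofb_comp_line_hasDerivAt {F : E → ℝ} {g : E} (x d : E)
    (hgrad : HasGradientAt F g (x + (0:ℝ) • d)) :
    HasDerivAt (fun t : ℝ => F (x + t • d)) ⟪g, d⟫_ℝ 0 := by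
  have h := hgrad.hasFDerivAt.comp_hasDerivAt 0 (pofb_line_hasDerivAt x d 0)
  simpa [InnerProductSpace.toDual_apply_apply, Function.comp_def] using h

omit [CompleteSpace E] in
lemma pofb_quad_hasDerivAt (x d : E) :
    HasDerivAt (fun t : ℝ => ‖x + t • d‖ ^ 2) (2 * ⟪x, d⟫_ℝ) 0 := by
  have hf : (fun t : ℝ => ‖x + t • d‖ ^ 2)
      = fun t : ℝ => ‖x‖^2 + 2 * ⟪x, d⟫_ℝ * t + ‖d‖^2 * t^2 := by
    funext t
    rw [← real_inner_self_eq_norm_sq, ← real_inner_self_eq_norm_sq,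
      ← real_inner_self_eq_norm_sq]
    simp only [inner_add_add_self, real_inner_smul_right, real_inner_smul_left,
      real_inner_comm d x]
    ring
  rw [hf]
  have h1 : HasDerivAt (fun t : ℝ => ‖x‖^2 + 2 * ⟪x, d⟫_ℝ * t + ‖d‖^2 * t^2)
      (0 + 2 * ⟪x, d⟫_ℝ * 1 + ‖d‖^2 * (2 * 0)) 0 := by
    apply HasDerivAt.add
    · exact (hasDerivAt_const _ _).add ((hasDerivAt_id 0).const_mul _)
    · simpa using (((hasDerivAt_pow 2 (0:ℝ))).const_mul (‖d‖^2))
  simpa using h1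

/-- First-order inequality for (strongly) convex differentiable functions. -/
lemma pofb_grad_strong_ineq {F : E → ℝ} {F' : E} {γ : ℝ}
    (hsc : ConvexOn ℝ Set.univ (fun w => F w - γ / 2 * ‖w‖ ^ 2))
    (x y : E) (hgrad : HasGradientAt F F' x) :
    F x + ⟪F', y - x⟫_ℝ + γ / 2 * ‖y - x‖ ^ 2 ≤ F y := by
  set d := y - x with hd
  set φ : ℝ → ℝ := fun t => F (x + t • d) - γ / 2 * ‖x + t • d‖ ^ 2 with hφ
  have hx0 : x + (0:ℝ) • d = x := by simp
  have hx1 : x + (1:ℝ) • d = y := by rw [hd]; module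
  have hdF : HasDerivAt φ (⟪F', d⟫_ℝ - γ / 2 * (2 * ⟪x, d⟫_ℝ)) 0 := by
    apply HasDerivAt.sub
    · exact pofb_comp_line_hasDerivAt x d (by rwa [hx0])
    · exact (pofb_quad_hasDerivAt x d).const_mul _
  have hb : ∀ t ∈ Set.Ioc (0:ℝ) 1, φ t ≤ (1 - t) * φ 0 + t * φ 1 := by
    intro t ht
    have h2 := hsc.2 (mem_univ x) (mem_univ y) (by linarith [ht.2] : (0:ℝ) ≤ 1 - t)
        (le_of_lt ht.1) (by ring)
    have hxy : (1 - t) • x + t • y = x + t • d := by rw [hd]; module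
    simp only [hφ, hx0, hx1, hxy] at h2 ⊢
    simpa using h2
  have key := pofb_slope_aux hb hdF
  have e0 : φ 0 = F x - γ / 2 * ‖x‖ ^ 2 := by simp only [hφ, hx0]
  have e1 : φ 1 = F y - γ / 2 * ‖y‖ ^ 2 := by simp only [hφ, hx1]
  have expand : ‖d‖ ^ 2 = ‖y‖^2 - 2 * ⟪x, y⟫_ℝ + ‖x‖^2 := by
    rw [hd, ← real_inner_self_eq_norm_sq, ← real_inner_self_eq_norm_sq,
      ← real_inner_self_eq_norm_sq, inner_sub_sub_self]
    rw [real_inner_comm y x]; ring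
  have hxd : ⟪x, d⟫_ℝ = ⟪x, y⟫_ℝ - ‖x‖^2 := by
    rw [hd, inner_sub_right, real_inner_self_eq_norm_sq]
  rw [e0, e1, hxd] at key
  have e2 : γ/2*‖d‖^2 = γ/2*‖y‖^2 - γ*⟪x, y⟫_ℝ + γ/2*‖x‖^2 := by rw [expand]; ring
  linarith [key, e2]

lemma pofb_comp_line_hasDerivAt' {F : E → ℝ} {F' : E → E} (x d : E)
    (hgrad : ∀ w, HasGradientAt F (F' w) w) (t : ℝ) :
    HasDerivAt (fun s : ℝ => F (x + s • d)) ⟪F' (x + t • d), d⟫_ℝ t := by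
  have h := (hgrad (x + t • d)).hasFDerivAt.comp_hasDerivAt t
    (by simpa using ((hasDerivAt_id t).smul_const d).const_add x : HasDerivAt (fun s : ℝ => x + s • d) d t)
  simpa [InnerProductSpace.toDual_apply_apply, Function.comp_def] using h

/-- Descent lemma. -/
lemma pofb_descent_lemma {F : E → ℝ} {F' : E → E} {L : ℝ}
    (hgrad : ∀ w, HasGradientAt F (F' w) w)
    (hlip : ∀ w w', ‖F' w - F' w'‖ ≤ L * ‖w - w'‖) (x y : E) :
    F y ≤ F x + ⟪F' x, y - x⟫_ℝ + L / 2 * ‖y - x‖ ^ 2 := by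
  set d := y - x with hd
  set g : ℝ → ℝ := fun t => F (x + t • d) - t * ⟪F' x, d⟫_ℝ - L * t^2 / 2 * ‖d‖^2
    with hg
  have hx0 : x + (0:ℝ) • d = x := by simp
  have hx1 : x + (1:ℝ) • d = y := by rw [hd]; module
  have hder : ∀ t : ℝ, HasDerivAt g
      (⟪F' (x + t • d), d⟫_ℝ - ⟪F' x, d⟫_ℝ - L * t * ‖d‖^2) t := by
    intro t
    have h1 := pofb_comp_line_hasDerivAt' x d hgrad t
    have h2 : HasDerivAt (fun t : ℝ => t * ⟪F' x, d⟫_ℝ) ⟪F' x, d⟫_ℝ t := by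
      simpa using (hasDerivAt_id t).mul_const ⟪F' x, d⟫_ℝ
    have h3 : HasDerivAt (fun t : ℝ => L * t^2 / 2 * ‖d‖^2) (L * t * ‖d‖^2) t := by
      have h4 : HasDerivAt (fun t : ℝ => t^2) (2 * t) t := by simpa using hasDerivAt_pow 2 t
      have h5 : HasDerivAt (fun t : ℝ => L * t^2 / 2 * ‖d‖^2) (L * (2 * t) / 2 * ‖d‖^2) t :=
        ((h4.const_mul L).div_const 2).mul_const (‖d‖^2)
      convert h5 using 1; ring
    exact (h1.sub h2).sub h3
  have hanti : AntitoneOn g (Icc (0:ℝ) 1) := by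
    apply antitoneOn_of_deriv_nonpos (convex_Icc 0 1)
    · exact (Differentiable.continuous (fun t => (hder t).differentiableAt)).continuousOn
    · intro t ht
      exact (hder t).differentiableAt.differentiableWithinAt
    · intro t ht
      rw [interior_Icc] at ht
      rw [(hder t).deriv]
      have hb : ⟪F' (x + t • d) - F' x, d⟫_ℝ ≤ L * t * ‖d‖^2 := by
        calc ⟪F' (x + t • d) - F' x, d⟫_ℝ ≤ ‖F' (x + t • d) - F' x‖ * ‖d‖ :=
              real_inner_le_norm _ _
          _ ≤ (L * ‖(x + t • d) - x‖) * ‖d‖ := by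
              apply mul_le_mul_of_nonneg_right (hlip _ _) (norm_nonneg d)
          _ = L * t * ‖d‖^2 := by
              simp only [add_sub_cancel_left, norm_smul, Real.norm_eq_abs,
                abs_of_pos ht.1]
              ring
      rw [inner_sub_left] at hb
      linarith
  have h6 := hanti (left_mem_Icc.2 zero_le_one) (right_mem_Icc.2 zero_le_one) zero_le_one
  simp only [hg, hx0, hx1] at h6
  linarith [h6]

omit [CompleteSpace E] in
lemma pofb_prox_ne_top {G : E → EReal} {τ : ℝ} (hτ : 0 < τ) {v p : E}
    (hprox : IsProx G τ v p) (hbot : ∀ w, G w ≠ ⊥) {w : E} (hw : G w ≠ ⊤) :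
    G p ≠ ⊤ := by
  intro htop
  have h := hprox w
  rw [htop, EReal.mul_top_of_pos (by exact_mod_cast hτ)] at h
  rw [EReal.top_add_of_ne_bot (EReal.coe_ne_bot _)] at h
  have hwr : G w = ((G w).toReal : EReal) := (EReal.coe_toReal hw (hbot w)).symm
  rw [hwr] at h
  rw [← EReal.coe_mul, ← EReal.coe_add, top_le_iff] at h
  exact EReal.coe_ne_top _ h

omit [CompleteSpace E] in
/-- Strong-convexity inequality for the prox point, in real form. -/
lemma pofb_prox_strong_real {G : E → EReal} {τ γG : ℝ} (hτ : 0 < τ) (hγG : 0 ≤ γG)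
    {v p : E} (hprox : IsProx G τ v p) (hbot : ∀ w, G w ≠ ⊥)
    (hGsc : EConvexOn (fun w => G w - ((γG / 2 * ‖w‖ ^ 2 : ℝ) : EReal)))
    {q : E} (hq : G q ≠ ⊤) :
    τ * (G p).toReal + 1/2 * ‖p - v‖^2 + (1 + τ * γG)/2 * ‖p - q‖^2 ≤
      τ * (G q).toReal + 1/2 * ‖q - v‖^2 := by
  have hptop : G p ≠ ⊤ := pofb_prox_ne_top hτ hprox hbot hq
  set gp := (G p).toReal with hgp
  set gq := (G q).toReal with hgq
  have hpe : G p = ((gp : ℝ) : EReal) := (EReal.coe_toReal hptop (hbot p)).symm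
  have hqe : G q = ((gq : ℝ) : EReal) := (EReal.coe_toReal hq (hbot q)).symm
  have key : ∀ lam : ℝ, 0 < lam → lam < 1 →
      τ * gp + 1/2 * ‖p - v‖^2 + (1 - lam) * (1 + τ * γG)/2 * ‖p - q‖^2 ≤
        τ * gq + 1/2 * ‖q - v‖^2 := by
    intro lam h0 h1
    set w := (1 - lam) • p + lam • q with hw
    have hsc := hGsc p q (1 - lam) lam (by linarith) (le_of_lt h0) (by ring)
    have hrhs : ((1 - lam : ℝ) : EReal) * (G p - ((γG / 2 * ‖p‖ ^ 2 : ℝ) : EReal))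
        + ((lam : ℝ) : EReal) * (G q - ((γG / 2 * ‖q‖ ^ 2 : ℝ) : EReal))
        = (((1 - lam) * (gp - γG / 2 * ‖p‖ ^ 2) + lam * (gq - γG / 2 * ‖q‖ ^ 2) : ℝ) : EReal) := by
      rw [hpe, hqe]; norm_cast
    rw [hrhs] at hsc
    simp only [] at hsc
    have hwtop : G w ≠ ⊤ := by
      intro htop
      rw [htop] at hsc
      rw [EReal.top_sub_coe, top_le_iff] at hsc
      exact EReal.coe_ne_top _ hsc
    have hwe : G w = (((G w).toReal : ℝ) : EReal) := (EReal.coe_toReal hwtop (hbot w)).symm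
    set gw := (G w).toReal
    rw [hwe] at hsc
    rw [← EReal.coe_sub, EReal.coe_le_coe_iff] at hsc
    have hpx := hprox w
    rw [hpe, hwe] at hpx
    rw [← EReal.coe_mul, ← EReal.coe_mul, ← EReal.coe_add, ← EReal.coe_add,
      EReal.coe_le_coe_iff] at hpx
    have hiden : ∀ a b : E, ‖(1 - lam) • a + lam • b‖^2
        = (1 - lam) * ‖a‖^2 + lam * ‖b‖^2 - lam * (1 - lam) * ‖a - b‖^2 := by
      intro a b
      have e1 : ‖(1 - lam) • a + lam • b‖^2 = ⟪(1 - lam) • a + lam • b, (1 - lam) • a + lam • b⟫_ℝ := (real_inner_self_eq_norm_sq _).symm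
      have e2 : ‖a‖^2 = ⟪a, a⟫_ℝ := (real_inner_self_eq_norm_sq _).symm
      have e3 : ‖b‖^2 = ⟪b, b⟫_ℝ := (real_inner_self_eq_norm_sq _).symm
      have e4 : ‖a - b‖^2 = ⟪a, a⟫_ℝ - 2 * ⟪a, b⟫_ℝ + ⟪b, b⟫_ℝ := by
        rw [← real_inner_self_eq_norm_sq, inner_sub_sub_self, real_inner_comm b a]; ring
      rw [e1, e2, e3, e4]
      simp only [inner_add_add_self, real_inner_smul_left, real_inner_smul_right,
        real_inner_comm b a]
      ring
    have hid1 : ‖w - v‖^2 = (1 - lam) * ‖p - v‖^2 + lam * ‖q - v‖^2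
        - lam * (1 - lam) * ‖p - q‖^2 := by
      have h7 : w - v = (1 - lam) • (p - v) + lam • (q - v) := by rw [hw]; module
      rw [h7, hiden]
      congr 3
      abel
    have hid2 : ‖w‖^2 = (1 - lam) * ‖p‖^2 + lam * ‖q‖^2
        - lam * (1 - lam) * ‖p - q‖^2 := by rw [hw, hiden]
    rw [hid1] at hpx
    rw [hid2] at hsc
    have hg : gw ≤ (1 - lam) * gp + lam * gq - γG/2 * (lam * (1 - lam) * ‖p - q‖^2) := by
      nlinarith [hsc]
    have final : τ * gp + 1/2 * ‖p - v‖^2 ≤ τ * ((1 - lam) * gp + lam * gq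
        - γG/2 * (lam * (1 - lam) * ‖p - q‖^2))
        + 1/2 * ((1 - lam) * ‖p - v‖^2 + lam * ‖q - v‖^2 - lam * (1 - lam) * ‖p - q‖^2) := by
      have := mul_le_mul_of_nonneg_left hg (le_of_lt hτ)
      linarith [hpx]
    have hdiv : lam * (τ * gp + 1/2 * ‖p - v‖^2 + (1 - lam) * (1 + τ * γG)/2 * ‖p - q‖^2)
        ≤ lam * (τ * gq + 1/2 * ‖q - v‖^2) := by nlinarith [final]
    exact le_of_mul_le_mul_left hdiv h0
  have hK : 0 ≤ (1 + τ * γG)/2 * ‖p - q‖^2 := by positivity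
  set K := (1 + τ * γG)/2 * ‖p - q‖^2 with hKdef
  refine le_of_forall_pos_le_add ?_
  intro ε hε
  set lam := min (1/2) (ε / (K + 1)) with hlam
  have hl0 : 0 < lam := lt_min (by norm_num) (by positivity)
  have hl1 : lam < 1 := lt_of_le_of_lt (min_le_left _ _) (by norm_num)
  have h := key lam hl0 hl1
  have hlK : lam * K ≤ ε := by
    have h1 : lam ≤ ε / (K + 1) := min_le_right _ _
    have h8 : lam * K ≤ (ε / (K + 1)) * K := by nlinarith
    calc lam * K ≤ (ε / (K + 1)) * K := h8
      _ ≤ ε := by rw [div_mul_eq_mul_div, div_le_iff₀ (by linarith)]; nlinarith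
  have expand : (1 - lam) * (1 + τ * γG)/2 * ‖p - q‖^2 = K - lam * K := by
    rw [hKdef]; ring
  rw [expand] at h
  linarith

set_option maxHeartbeats 1000000 in
/-- The one-step forward-backward estimate. -/
lemma pofb_step_ineq {F : E → ℝ} {F' : E → E} {G : E → EReal} {L γF γG γ τ ζ : ℝ}
    (hτ : 0 < τ) (hζ0 : 0 < ζ) (hζ1 : ζ ≤ 1) (hγF : 0 ≤ γF) (hγG : 0 ≤ γG)
    (hL : 0 ≤ L)
    (hFgrad : ∀ w, HasGradientAt F (F' w) w)
    (hFlip : ∀ w w', ‖F' w - F' w'‖ ≤ L * ‖w - w'‖)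
    (hFsc : ConvexOn ℝ Set.univ (fun w => F w - γF / 2 * ‖w‖ ^ 2))
    (hGbot : ∀ w, G w ≠ ⊥)
    (hGsc : EConvexOn (fun w => G w - ((γG / 2 * ‖w‖ ^ 2 : ℝ) : EReal)))
    (hγdef : γ = if 0 < γF then γG + γF - τ * ζ⁻¹ * L ^ 2 else γG)
    (hγcase : γF = 0 → τ * L ≤ ζ)
    {z p q : E} (hprox : IsProx G τ (z - τ • F' z) p) (hq : G q ≠ ⊤) :
    τ * (F p + (G p).toReal - F q - (G q).toReal) + (1 + γ * τ)/2 * ‖p - q‖^2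
      + (1 - ζ)/2 * ‖p - z‖^2 ≤ 1/2 * ‖z - q‖^2 := by
  set v := z - τ • F' z with hv
  have base := pofb_prox_strong_real hτ hγG hprox hGbot hGsc hq
  have hexp : ∀ a : E, ‖a - v‖^2 = ‖a - z‖^2 + 2 * τ * ⟪F' z, a - z⟫_ℝ
      + τ^2 * ‖F' z‖^2 := by
    intro a
    have h1 : a - v = (a - z) + τ • F' z := by rw [hv]; abel
    rw [h1, ← real_inner_self_eq_norm_sq, ← real_inner_self_eq_norm_sq,
      ← real_inner_self_eq_norm_sq, inner_add_add_self, real_inner_smul_left,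
      real_inner_smul_right, real_inner_smul_left, real_inner_smul_right,
      real_inner_comm (F' z) (a - z)]
    ring
  rw [hexp p, hexp q] at base
  set gp := (G p).toReal
  set gq := (G q).toReal
  have hFest : τ * (F p - F q) ≤ τ * ⟪F' z, p - q⟫_ℝ
      + τ * (γG - γ)/2 * ‖p - q‖^2 + ζ/2 * ‖p - z‖^2 := by
    by_cases hpos : 0 < γF
    · rw [if_pos hpos] at hγdef
      have hsc := pofb_grad_strong_ineq hFsc p q (hFgrad p)
      have hCS : ⟪F' p - F' z, p - q⟫_ℝ ≤ L * ‖p - z‖ * ‖p - q‖ := by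
        calc ⟪F' p - F' z, p - q⟫_ℝ ≤ ‖F' p - F' z‖ * ‖p - q‖ := real_inner_le_norm _ _
          _ ≤ (L * ‖p - z‖) * ‖p - q‖ :=
              mul_le_mul_of_nonneg_right (hFlip p z) (norm_nonneg _)
          _ = L * ‖p - z‖ * ‖p - q‖ := by ring
      have hYoung : τ * (L * ‖p - z‖ * ‖p - q‖) ≤ ζ/2 * ‖p - z‖^2
          + τ^2 * L^2/(2*ζ) * ‖p - q‖^2 := by
        have hq2 : 2*ζ*(ζ/2*‖p - z‖^2 + τ^2*L^2/(2*ζ)*‖p - q‖^2)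
            = ζ^2*‖p - z‖^2 + τ^2*L^2*‖p - q‖^2 := by
          field_simp
        have hkey : 2*ζ*(τ * (L * ‖p - z‖ * ‖p - q‖))
            ≤ ζ^2*‖p - z‖^2 + τ^2*L^2*‖p - q‖^2 := by
          nlinarith [sq_nonneg (ζ * ‖p - z‖ - τ * L * ‖p - q‖)]
        rw [← hq2] at hkey
        exact le_of_mul_le_mul_left hkey (by positivity)
      have hiq : ⟪F' p, q - p⟫_ℝ = - ⟪F' p, p - q⟫_ℝ := by
        rw [← inner_neg_right]; congr 1; abel
      have hsplit : ⟪F' p, p - q⟫_ℝ = ⟪F' z, p - q⟫_ℝ + ⟪F' p - F' z, p - q⟫_ℝ := by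
        rw [inner_sub_left]; ring
      have hnrev : ‖q - p‖ = ‖p - q‖ := norm_sub_rev _ _
      rw [hiq, hnrev] at hsc
      have step1 : F p - F q ≤ ⟪F' z, p - q⟫_ℝ + ⟪F' p - F' z, p - q⟫_ℝ
          - γF/2 * ‖p - q‖^2 := by rw [← hsplit]; linarith
      have step2 : τ * (F p - F q) ≤ τ * ⟪F' z, p - q⟫_ℝ
          + τ * (L * ‖p - z‖ * ‖p - q‖) - τ * γF/2 * ‖p - q‖^2 := by
        have h5 := mul_le_mul_of_nonneg_left step1 (le_of_lt hτ)
        have hC := mul_le_mul_of_nonneg_left hCS (le_of_lt hτ)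
        nlinarith [h5, hC]
      have hgrel : τ * (γG - γ)/2 = τ^2 * L^2/(2*ζ) - τ * γF/2 := by
        rw [hγdef]; field_simp; ring
      rw [hgrel]; linarith
    · have hγF0 : γF = 0 := le_antisymm (not_lt.1 hpos) hγF
      rw [if_neg hpos] at hγdef
      have hconvq := pofb_grad_strong_ineq hFsc z q (hFgrad z)
      rw [hγF0] at hconvq
      have hdesc := pofb_descent_lemma hFgrad hFlip z p
      have hsub : ⟪F' z, p - z⟫_ℝ - ⟪F' z, q - z⟫_ℝ = ⟪F' z, p - q⟫_ℝ := by
        rw [← inner_sub_right]; congr 1; abel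
      have hLbound : τ * (L/2 * ‖p - z‖^2) ≤ ζ/2 * ‖p - z‖^2 := by
        have h2 := hγcase hγF0
        nlinarith [mul_nonneg (sub_nonneg.2 h2) (sq_nonneg ‖p - z‖)]
      have hγeq : γG - γ = 0 := by rw [hγdef]; ring
      rw [hγeq]
      have h3 : F p - F q ≤ ⟪F' z, p - q⟫_ℝ + L/2 * ‖p - z‖^2 := by
        rw [← hsub]; linarith [hconvq, hdesc]
      have h4 := mul_le_mul_of_nonneg_left h3 (le_of_lt hτ)
      linarith [h4, hLbound]
  have hzq : ‖q - z‖ = ‖z - q‖ := norm_sub_rev _ _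
  rw [hzq] at base
  have hinner : τ * ⟪F' z, p - z⟫_ℝ - τ * ⟪F' z, q - z⟫_ℝ = τ * ⟪F' z, p - q⟫_ℝ := by
    rw [← mul_sub, ← inner_sub_right]
    congr 2
    abel
  linarith [base, hFest, hinner]

lemma pofb_add_coe_coe (a : EReal) (r s : ℝ) :
    a + (r:EReal) + (s:EReal) = a + ((r + s : ℝ) : EReal) := by
  induction a using EReal.rec with
  | bot => simp
  | coe t => norm_cast; ring
  | top => simp [EReal.top_add_coe, ← EReal.coe_add]

lemma pofb_coe_sum (s : Finset ℕ) (f : ℕ → ℝ) :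
    (↑(∑ k ∈ s, f k) : EReal) = ∑ k ∈ s, ((f k : ℝ) : EReal) :=
  map_sum (⟨⟨Real.toEReal, EReal.coe_zero⟩, EReal.coe_add⟩ : ℝ →+ EReal) _ _

end Auxiliary

/-- **Regret estimate for predictive online forward–backward splitting**
(Theorem 2.5). -/
theorem pofb_regret
    {X : ℕ → Type*}
    [∀ k, NormedAddCommGroup (X k)] [∀ k, InnerProductSpace ℝ (X k)]
    [∀ k, CompleteSpace (X k)]
    (F : ∀ k, X k → ℝ) (F' : ∀ k, X k → X k) (G : ∀ k, X k → EReal)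
    (L γF γG γ τ ζ Λ ε φ : ℕ → ℝ)
    (hτ : ∀ k, 0 < τ k) (hζ : ∀ k, 0 < ζ k ∧ ζ k ≤ 1)
    (hγF : ∀ k, 0 ≤ γF k) (hγG : ∀ k, 0 ≤ γG k) (hL : ∀ k, 0 ≤ L k)
    (hFconv : ∀ k, 1 ≤ k → ConvexOn ℝ Set.univ (F k))
    (hFgrad : ∀ k, 1 ≤ k → ∀ w, HasGradientAt (F k) (F' k w) w)
    (hFlip : ∀ k, 1 ≤ k → ∀ w w', ‖F' k w - F' k w'‖ ≤ L k * ‖w - w'‖)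
    (hFsc : ∀ k, 1 ≤ k → ConvexOn ℝ Set.univ (fun w => F k w - γF k / 2 * ‖w‖ ^ 2))
    (hGconv : ∀ k, 1 ≤ k → EConvexOn (G k))
    (hGproper : ∀ k, 1 ≤ k → (∀ w, G k w ≠ ⊥) ∧ ∃ w, G k w ≠ ⊤)
    (hGlsc : ∀ k, 1 ≤ k → LowerSemicontinuous (G k))
    (hGsc : ∀ k, 1 ≤ k →
      EConvexOn (fun w => G k w - ((γG k / 2 * ‖w‖ ^ 2 : ℝ) : EReal)))
    (hγdef : ∀ k, 1 ≤ k →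
      γ k = if 0 < γF k then γG k + γF k - τ k * (ζ k)⁻¹ * L k ^ 2 else γG k)
    (hγcase : ∀ k, 1 ≤ k → γF k = 0 → τ k * L k ≤ ζ k)
    (hγpos : ∀ k, 0 ≤ γ k)
    (hΛ : ∀ k, 0 < Λ k)
    (A : ∀ k, X k → X (k + 1))
    (𝓑 : Set (∀ k, X k))
    (h𝓑bdd : ∀ k, Bornology.IsBounded ((fun b => b k) '' 𝓑))
    (x : ∀ k, X k)
    (hstep : ∀ k : ℕ, IsProx (G (k + 1)) (τ (k + 1))
      (A k (x k) - τ (k + 1) • F' (k + 1) (A k (x k))) (x (k + 1)))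
    (hpred : ∀ b ∈ 𝓑, ∀ k : ℕ,
      1 / 2 * ‖A k (x k) - b (k + 1)‖ ^ 2 ≤ Λ k / 2 * ‖x k - b k‖ ^ 2 + ε (k + 1))
    (N : ℕ)
    (hφpos : ∀ k, 0 ≤ φ k)
    (hφ : ∀ k < N, φ (k + 1) ≤ φ k * (1 + γ k * τ k) * (Λ k)⁻¹) :
    (⨆ b ∈ 𝓑, ∑ k ∈ Finset.Icc 1 N,
        ((φ k * τ k : ℝ) : EReal) *
          ((((F k (x k) : ℝ) : EReal) + G k (x k)) -
            (((F k (b k) : ℝ) : EReal) + G k (b k))))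
      + ((∑ k ∈ Finset.range N,
          φ (k + 1) * (1 - ζ (k + 1)) / 2 * ‖x (k + 1) - A k (x k)‖ ^ 2 : ℝ) : EReal)
    ≤ (⨆ b ∈ 𝓑, ((φ 0 * (1 + γ 0 * τ 0) / 2 * ‖x 0 - b 0‖ ^ 2 : ℝ) : EReal))
      + ((∑ k ∈ Finset.Icc 1 N, ε k * φ k : ℝ) : EReal) := by
  classical
  set C : ℝ := ∑ k ∈ Finset.range N,
      φ (k + 1) * (1 - ζ (k + 1)) / 2 * ‖x (k + 1) - A k (x k)‖ ^ 2 with hCdef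
  set D : ℝ := ∑ k ∈ Finset.Icc 1 N, ε k * φ k with hDdef
  set R : EReal := ⨆ b ∈ 𝓑, ((φ 0 * (1 + γ 0 * τ 0) / 2 * ‖x 0 - b 0‖ ^ 2 : ℝ) : EReal)
    with hRdef
  -- finiteness of G along the iterates
  have hGxtop : ∀ k : ℕ, G (k+1) (x (k+1)) ≠ ⊤ := by
    intro k
    obtain ⟨w, hw⟩ := (hGproper (k+1) (Nat.le_add_left 1 k)).2
    exact pofb_prox_ne_top (hτ (k+1)) (hstep k) (hGproper (k+1) (Nat.le_add_left 1 k)).1 hw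
  -- the main per-comparison-sequence estimate
  have main : ∀ b ∈ 𝓑, (∑ k ∈ Finset.Icc 1 N,
        ((φ k * τ k : ℝ) : EReal) *
          ((((F k (x k) : ℝ) : EReal) + G k (x k)) -
            (((F k (b k) : ℝ) : EReal) + G k (b k))))
      ≤ R + ((D - C : ℝ) : EReal) := by
    intro b hb
    set S : ℕ → ℝ := fun k => φ k * τ k *
      (F k (x k) + (G k (x k)).toReal - (F k (b k) + (G k (b k)).toReal)) with hSdef
    set V : ℕ → ℝ := fun k => φ k * (1 + γ k * τ k) / 2 * ‖x k - b k‖ ^ 2 with hVdef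
    set W : ℕ → ℝ := fun k =>
      φ (k + 1) * (1 - ζ (k + 1)) / 2 * ‖x (k + 1) - A k (x k)‖ ^ 2 with hWdef
    -- computation of a term when `G k (b k) = ⊤` and the coefficient is nonzero
    have hbotcalc : ∀ k, 1 ≤ k → φ k ≠ 0 → G k (b k) = ⊤ →
        ((φ k * τ k : ℝ) : EReal) *
          ((((F k (x k) : ℝ) : EReal) + G k (x k)) -
            (((F k (b k) : ℝ) : EReal) + G k (b k))) = ⊥ := by
      intro k hk1 hφk hbtop
      obtain ⟨j, rfl⟩ : ∃ j, k = j + 1 := ⟨k - 1, (Nat.succ_pred_eq_of_pos hk1).symm⟩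
      have hxe : G (j+1) (x (j+1)) = (((G (j+1) (x (j+1))).toReal : ℝ) : EReal) :=
        (EReal.coe_toReal (hGxtop j) ((hGproper (j+1) (Nat.le_add_left 1 j)).1 _)).symm
      rw [hbtop, hxe, EReal.coe_add_top, ← EReal.coe_add, EReal.sub_top,
        EReal.coe_mul_bot_of_pos]
      exact_mod_cast mul_pos (lt_of_le_of_ne (hφpos _) (Ne.symm hφk)) (hτ _)
    by_cases hbot : ∃ k ∈ Finset.Icc 1 N,
        ((φ k * τ k : ℝ) : EReal) *
          ((((F k (x k) : ℝ) : EReal) + G k (x k)) -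
            (((F k (b k) : ℝ) : EReal) + G k (b k))) = ⊥
    · obtain ⟨k0, hk0mem, hk0⟩ := hbot
      rw [← Finset.add_sum_erase _ _ hk0mem, hk0, EReal.bot_add]
      exact bot_le
    · push_neg at hbot
      -- with no `⊥` term, `G k (b k)` is finite whenever `φ k ≠ 0`
      have hfin : ∀ k, k ∈ Finset.Icc 1 N → φ k ≠ 0 → G k (b k) ≠ ⊤ := by
        intro k hk hφk hbtop
        exact hbot k hk (hbotcalc k (Finset.mem_Icc.1 hk).1 hφk hbtop)
      -- each term is the coercion of the real quantity `S k`
      have hterm : ∀ k ∈ Finset.Icc 1 N,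
          ((φ k * τ k : ℝ) : EReal) *
            ((((F k (x k) : ℝ) : EReal) + G k (x k)) -
              (((F k (b k) : ℝ) : EReal) + G k (b k))) = ((S k : ℝ) : EReal) := by
        intro k hk
        have hk1 : 1 ≤ k := (Finset.mem_Icc.1 hk).1
        by_cases hφk : φ k = 0
        · have hco : ((φ k * τ k : ℝ) : EReal) = (0 : EReal) := by
            rw [hφk]; norm_num
          have hSk : S k = 0 := by rw [hSdef]; simp [hφk]
          rw [hco, zero_mul, hSk]; norm_num
        · have hbtop := hfin k hk hφk
          obtain ⟨j, rfl⟩ : ∃ j, k = j + 1 := ⟨k - 1, (Nat.succ_pred_eq_of_pos hk1).symm⟩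
          have hxe : G (j+1) (x (j+1)) = (((G (j+1) (x (j+1))).toReal : ℝ) : EReal) :=
            (EReal.coe_toReal (hGxtop j) ((hGproper (j+1) (Nat.le_add_left 1 j)).1 _)).symm
          have hbe : G (j+1) (b (j+1)) = (((G (j+1) (b (j+1))).toReal : ℝ) : EReal) :=
            (EReal.coe_toReal hbtop ((hGproper (j+1) (Nat.le_add_left 1 j)).1 _)).symm
          rw [hxe, hbe, hSdef]
          push_cast
          ring
      rw [Finset.sum_congr rfl hterm, ← pofb_coe_sum]
      -- it remains to establish the real inequality
      -- per-step estimate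
      have hstepk : ∀ k, k < N →
          S (k+1) + W k + V (k+1) ≤ V k + ε (k+1) * φ (k+1) := by
        intro k hkN
        have hVnonneg : 0 ≤ V k := by
          have h1 : (0:ℝ) ≤ 1 + γ k * τ k := by nlinarith [hγpos k, (hτ k).le]
          simp only [hVdef]
          exact mul_nonneg (div_nonneg (mul_nonneg (hφpos k) h1) (by norm_num))
            (sq_nonneg _)
        by_cases hφz : φ (k+1) = 0
        · have : S (k+1) = 0 ∧ W k = 0 ∧ V (k+1) = 0 := by
            refine ⟨?_, ?_, ?_⟩ <;> simp [hSdef, hWdef, hVdef, hφz]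
          rw [this.1, this.2.1, this.2.2, hφz]
          simpa using hVnonneg
        · have hmem : (k+1) ∈ Finset.Icc 1 N :=
            Finset.mem_Icc.2 ⟨Nat.le_add_left 1 k, hkN⟩
          have hbtop' : G (k+1) (b (k+1)) ≠ ⊤ := hfin (k+1) hmem hφz
          have hsi := pofb_step_ineq (hτ (k+1)) (hζ (k+1)).1 (hζ (k+1)).2
            (hγF (k+1)) (hγG (k+1)) (hL (k+1))
            (hFgrad (k+1) (Nat.le_add_left 1 k)) (hFlip (k+1) (Nat.le_add_left 1 k))
            (hFsc (k+1) (Nat.le_add_left 1 k))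
            ((hGproper (k+1) (Nat.le_add_left 1 k)).1)
            (hGsc (k+1) (Nat.le_add_left 1 k))
            (hγdef (k+1) (Nat.le_add_left 1 k)) (hγcase (k+1) (Nat.le_add_left 1 k))
            (hstep k) hbtop'
          have hpr := hpred b hb k
          have h1 := mul_le_mul_of_nonneg_left hsi (hφpos (k+1))
          have h2 := mul_le_mul_of_nonneg_left hpr (hφpos (k+1))
          have hφΛ : φ (k+1) * Λ k ≤ φ k * (1 + γ k * τ k) := by
            have h := mul_le_mul_of_nonneg_right (hφ k hkN) (le_of_lt (hΛ k))
            rwa [mul_assoc, inv_mul_cancel₀ (ne_of_gt (hΛ k)), mul_one] at h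
          have h3 := mul_le_mul_of_nonneg_right hφΛ
            (by positivity : (0:ℝ) ≤ ‖x k - b k‖^2 / 2)
          rw [hSdef, hWdef, hVdef]
          simp only []
          nlinarith [h1, h2, h3]
      -- telescoping
      have htel : ∀ n, n ≤ N →
          ∑ j ∈ Finset.range n, (S (j+1) + W j) + V n ≤
            V 0 + ∑ j ∈ Finset.range n, ε (j+1) * φ (j+1) := by
        intro n
        induction n with
        | zero => intro _; simp
        | succ n ih =>
          intro hn
          have h1 := ih (Nat.le_of_succ_le hn)
          have h2 := hstepk n (Nat.lt_of_succ_le hn)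
          rw [Finset.sum_range_succ, Finset.sum_range_succ]
          linarith
      have hVN : 0 ≤ V N := by
        have h1 : (0:ℝ) ≤ 1 + γ N * τ N := by nlinarith [hγpos N, (hτ N).le]
        simp only [hVdef]
        exact mul_nonneg (div_nonneg (mul_nonneg (hφpos N) h1) (by norm_num))
          (sq_nonneg _)
      have hfinal : ∑ k ∈ Finset.Icc 1 N, S k ≤ V 0 + (D - C) := by
        have h1 := htel N le_rfl
        have hsplit : ∑ j ∈ Finset.range N, (S (j+1) + W j) =
            ∑ j ∈ Finset.range N, S (j+1) + ∑ j ∈ Finset.range N, W j :=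
          Finset.sum_add_distrib
        have hIcc : ∑ k ∈ Finset.Icc 1 N, S k = ∑ j ∈ Finset.range N, S (j+1) := by
          rw [← Finset.Ico_add_one_right_eq_Icc, Finset.sum_Ico_eq_sum_range]
          simp [add_comm]
        have hD' : D = ∑ j ∈ Finset.range N, ε (j+1) * φ (j+1) := by
          rw [hDdef, ← Finset.Ico_add_one_right_eq_Icc, Finset.sum_Ico_eq_sum_range]
          simp [add_comm]
        have hC' : C = ∑ j ∈ Finset.range N, W j := by rw [hCdef, hWdef]
        rw [hIcc]
        rw [hsplit] at h1
        linarith [h1, hVN, hD' ▸ le_refl D, hC' ▸ le_refl C,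
          hD'.ge.trans_eq rfl, hC'.ge.trans_eq rfl,
          hD'.le.trans_eq rfl, hC'.le.trans_eq rfl]
      -- conclude in `EReal`
      have hV0R : ((V 0 : ℝ) : EReal) ≤ R := by
        rw [hRdef, hVdef]
        exact le_biSup (fun b => ((φ 0 * (1 + γ 0 * τ 0) / 2 * ‖x 0 - b 0‖ ^ 2 : ℝ) : EReal)) hb
      calc ((∑ k ∈ Finset.Icc 1 N, S k : ℝ) : EReal)
          ≤ ((V 0 + (D - C) : ℝ) : EReal) := by exact_mod_cast hfinal
        _ = ((V 0 : ℝ) : EReal) + ((D - C : ℝ) : EReal) := by norm_cast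
        _ ≤ R + ((D - C : ℝ) : EReal) := add_le_add hV0R le_rfl
  have h1 : (⨆ b ∈ 𝓑, ∑ k ∈ Finset.Icc 1 N,
        ((φ k * τ k : ℝ) : EReal) *
          ((((F k (x k) : ℝ) : EReal) + G k (x k)) -
            (((F k (b k) : ℝ) : EReal) + G k (b k))))
      ≤ R + ((D - C : ℝ) : EReal) := iSup₂_le main
  calc (⨆ b ∈ 𝓑, ∑ k ∈ Finset.Icc 1 N,
        ((φ k * τ k : ℝ) : EReal) *
          ((((F k (x k) : ℝ) : EReal) + G k (x k)) -
            (((F k (b k) : ℝ) : EReal) + G k (b k)))) + ((C : ℝ) : EReal)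
      ≤ (R + ((D - C : ℝ) : EReal)) + ((C : ℝ) : EReal) := add_le_add h1 le_rfl
    _ = R + ((D - C + C : ℝ) : EReal) := pofb_add_coe_coe R (D - C) C
    _ = R + ((D : ℝ) : EReal) := by rw [sub_add_cancel]
end

section
/- Dynamic regret bound for predictive online forward–backward splitting with constant step length. In the setting of the predictive online forward–backward method (spaces X_k, functions F_k, G_k with factors γ_{F_k}, γ_{G_k}, L_k, parameters ζ_k ∈ (0,1], γ_k defined case-wise with γ_k ≥ 0, predictors A_k, bounded comparison set 𝓑 with prediction bound with constants Λ_k and penalties ε_{k+1}), suppose the step lengths are constant, τ_k ≡ τ > 0, and that 1 + γ_k τ ≥ Λ_k for all k = 0,…,N−1. Let x^{1:N} be generated by z^{k+1} := A_k(x^k), x^{k+1} := prox_{τ G_{k+1}}(z^{k+1} − τ ∇F_{k+1}(z^{k+1})) from an initial x^0 ∈ X_0. Then dynregret_{𝓑_{1:N}}(x^{1:N}) + Σ_{k=0}^{N−1} ((1 − ζ_{k+1})/(2τ))·‖x^{k+1} − A_k(x^k)‖² ≤ sup over x̄^0 ∈ 𝓑_0 of (1 + γ_0 τ)·‖x^0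 − x̄^0‖²/(2τ) + Σ_{k=1}^{N} ε_k/τ. -/
open scoped InnerProductSpace

section Helpers

set_option linter.unusedSectionVars false

lemma ereal_coe_fsum {ι : Type*} (s : Finset ι) (f : ι → ℝ) :
    ((∑ i ∈ s, f i : ℝ) : EReal) = ∑ i ∈ s, ((f i : ℝ) : EReal) := by
  classical
  induction s using Finset.cons_induction with
  | empty => simp
  | cons a s ha ih => rw [Finset.sum_cons, Finset.sum_cons, ← ih, EReal.coe_add]

variable {E : Type*} [NormedAddCommGroup E] [InnerProductSpace ℝ E] [CompleteSpace E]

lemma half_norm_add_smul' (a b : E) (t : ℝ) :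
    1/2*‖a + t•b‖^2 = 1/2*‖a‖^2 + t*⟪a,b⟫_ℝ + t^2*(1/2*‖b‖^2) := by
  have h : ∀ c : E, ‖c‖^2 = ⟪c, c⟫_ℝ := fun c => (real_inner_self_eq_norm_sq c).symm
  rw [h, h, h]
  simp only [inner_add_left, inner_add_right, real_inner_smul_left, real_inner_smul_right,
    real_inner_comm b a]
  ring

lemma half_norm_combo' (p u v : E) (t : ℝ) :
    1/2*‖((1-t) • p + t • u) - v‖^2
      = (1-t)*(1/2*‖p - v‖^2) + t*(1/2*‖u - v‖^2) - t*(1-t)*(1/2*‖u - p‖^2) := by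
  have e1 : ((1-t) • p + t • u) - v = (p - v) + t•(u - p) := by module
  have e2 : u - v = (p - v) + (1:ℝ)•(u - p) := by module
  rw [e1, e2, half_norm_add_smul', half_norm_add_smul']
  ring

lemma hasDerivAt_line' {f : E → ℝ} {g : E → E}
    (hf' : ∀ w, HasGradientAt f (g w) w) (p d : E) (t : ℝ) :
    HasDerivAt (fun s : ℝ => f (p + s • d)) ⟪g (p + t • d), d⟫_ℝ t := by
  have hline : HasDerivAt (fun s : ℝ => p + s • d) d t := by
    simpa using ((hasDerivAt_id t).smul_const d).const_add p
  have := ((hf' (p + t • d)).hasFDerivAt).comp_hasDerivAt t hline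
  simpa [InnerProductSpace.toDual_apply_apply, Function.comp_def] using this

lemma convexOn_line {f : E → ℝ} (hf : ConvexOn ℝ Set.univ f) (p d : E) :
    ConvexOn ℝ Set.univ (fun s : ℝ => f (p + s • d)) := by
  have h := hf.comp_affineMap (AffineMap.lineMap p (p + d) : ℝ →ᵃ[ℝ] E)
  simp only [Set.preimage_univ] at h
  have he : (f ∘ ⇑(AffineMap.lineMap p (p + d))) = fun s : ℝ => f (p + s • d) := by
    funext s
    show f _ = f _
    congr 1
    simp [AffineMap.lineMap_apply]
    exact add_comm _ _
  rwa [he] at h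

/-- strong convexity inequality (c = 0 gives plain convexity inequality) -/
lemma strong_convex_grad_ineq {f : E → ℝ} {g : E → E} {c : ℝ}
    (hf : ConvexOn ℝ Set.univ (fun w => f w - c/2*‖w‖^2))
    (hf' : ∀ w, HasGradientAt f (g w) w) (p u : E) :
    f p + ⟪g p, u - p⟫_ℝ + c/2*‖u-p‖^2 ≤ f u := by
  set d := u - p with hd
  have hpd : p + d = u := by module
  set φ : ℝ → ℝ := fun s => f (p + s • d) - c/2*(‖p‖^2 + 2*s*⟪p,d⟫_ℝ + s^2*‖d‖^2) with hφ
  have hφeq : ∀ s : ℝ, (fun w => f w - c/2*‖w‖^2) (p + s • d) = φ s := by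
    intro s
    have : ‖p + s • d‖^2 = ‖p‖^2 + 2*s*⟪p,d⟫_ℝ + s^2*‖d‖^2 := by
      have := half_norm_add_smul' p d s
      linarith
    simp only [hφ, this]
  have hφconv : ConvexOn ℝ Set.univ φ := by
    have := convexOn_line hf p d
    simpa only [hφeq] using this
  have hq : HasDerivAt (fun s : ℝ => c/2*(‖p‖^2 + 2*s*⟪p,d⟫_ℝ + s^2*‖d‖^2))
      (c/2*(2*⟪p,d⟫_ℝ + 2*0*‖d‖^2)) 0 := by
    have h1 : HasDerivAt (fun s : ℝ => ‖p‖^2 + 2*s*⟪p,d⟫_ℝ + s^2*‖d‖^2)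
        (2*⟪p,d⟫_ℝ + 2*0*‖d‖^2) 0 := by
      have := (((hasDerivAt_id (0:ℝ)).const_mul 2).mul_const ⟪p,d⟫_ℝ).const_add (‖p‖^2)
      have h2 := ((hasDerivAt_pow 2 (0:ℝ)).mul_const (‖d‖^2))
      simpa [Pi.add_def] using this.add h2
    simpa using h1.const_mul (c/2)
  have hφd : HasDerivAt φ (⟪g p, d⟫_ℝ - c*⟪p,d⟫_ℝ) 0 := by
    have h0 := hasDerivAt_line' hf' p d 0
    simp only [zero_smul, add_zero] at h0
    have := h0.sub hq
    refine this.congr_deriv ?_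
    ring
  have := hφconv.le_slope_of_hasDerivAt (Set.mem_univ (0:ℝ)) (Set.mem_univ (1:ℝ)) one_pos hφd
  rw [slope_def_field] at this
  simp only [hφ, one_smul, zero_smul, add_zero, hpd] at this
  have h2 : (⟪g p, d⟫_ℝ - c*⟪p,d⟫_ℝ)
      ≤ f u - c/2*(‖p‖^2 + 2*⟪p,d⟫_ℝ + ‖d‖^2) - (f p - c/2*‖p‖^2) := by
    calc _ ≤ _ := this
    _ = _ := by ring_nf
  nlinarith [h2]

lemma descent_lemma_s4 {f : E → ℝ} {g : E → E} {L : ℝ} (hL : 0 ≤ L)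
    (hf' : ∀ w, HasGradientAt f (g w) w)
    (hlip : ∀ w w', ‖g w - g w'‖ ≤ L * ‖w - w'‖) (z p : E) :
    f p ≤ f z + ⟪g z, p - z⟫_ℝ + L/2 * ‖p - z‖^2 := by
  set d := p - z with hd
  have hpd : z + d = p := by module
  set ψ : ℝ → ℝ := fun t => ⟪g (z + t • d), d⟫_ℝ with hψ
  have hderiv : ∀ t ∈ Set.uIcc (0:ℝ) 1, HasDerivAt (fun s : ℝ => f (z + s • d)) (ψ t) t :=
    fun t _ => hasDerivAt_line' hf' z d t
  have hglip : LipschitzWith (Real.toNNReal L) g := by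
    apply LipschitzWith.of_dist_le_mul
    intro w w'
    rw [dist_eq_norm]
    calc ‖g w - g w'‖ ≤ L * ‖w - w'‖ := hlip w w'
    _ = Real.toNNReal L * dist w w' := by rw [dist_eq_norm, Real.coe_toNNReal L hL]
  have hcont : Continuous ψ := by
    apply Continuous.inner
    · exact hglip.continuous.comp (by continuity)
    · exact continuous_const
  have hint : IntervalIntegrable ψ MeasureTheory.volume 0 1 := hcont.intervalIntegrable 0 1
  have hftc : ∫ t in (0:ℝ)..1, ψ t
      = f (z + (1:ℝ) • d) - f (z + (0:ℝ) • d) :=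
    intervalIntegral.integral_eq_sub_of_hasDerivAt hderiv hint
  have hbound : ∀ t ∈ Set.Icc (0:ℝ) 1, ψ t ≤ ψ 0 + L * ‖d‖^2 * t := by
    intro t ht
    have h1 : ψ t - ψ 0 = ⟪g (z + t • d) - g (z + (0:ℝ) • d), d⟫_ℝ := by
      rw [hψ]; simp [inner_sub_left]
    have h2 : ⟪g (z + t • d) - g (z + (0:ℝ) • d), d⟫_ℝ
        ≤ ‖g (z + t • d) - g (z + (0:ℝ) • d)‖ * ‖d‖ := real_inner_le_norm _ _
    have h3 : ‖g (z + t • d) - g (z + (0:ℝ) • d)‖ ≤ L * (t * ‖d‖) := by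
      calc ‖g (z + t • d) - g (z + (0:ℝ) • d)‖ ≤ L * ‖(z + t • d) - (z + (0:ℝ) • d)‖ :=
        hlip _ _
      _ = L * (t * ‖d‖) := by
          rw [show (z + t • d) - (z + (0:ℝ) • d) = t • d by module, norm_smul]
          simp [abs_of_nonneg ht.1]
    nlinarith [norm_nonneg d, mul_le_mul_of_nonneg_right h3 (norm_nonneg d)]
  have hmono : ∫ t in (0:ℝ)..1, ψ t ≤ ∫ t in (0:ℝ)..1, (ψ 0 + L * ‖d‖^2 * t) := by
    apply intervalIntegral.integral_mono_on zero_le_one hint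
    · exact (Continuous.intervalIntegrable (by continuity) 0 1)
    · exact hbound
  have hval : ∫ t in (0:ℝ)..1, (ψ 0 + L * ‖d‖^2 * t) = ψ 0 + L * ‖d‖^2 / 2 := by
    have hint2 : IntervalIntegrable (fun t : ℝ => L * ‖d‖^2 * t) MeasureTheory.volume 0 1 :=
      (continuous_const.mul continuous_id').intervalIntegrable 0 1
    rw [intervalIntegral.integral_add intervalIntegrable_const hint2,
      intervalIntegral.integral_const_mul, integral_id]
    simp
    ring
  have hψ0 : ψ 0 = ⟪g z, d⟫_ℝ := by simp [hψ]
  have := hftc ▸ hmono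
  rw [hval, hψ0] at this
  simp only [one_smul, zero_smul, add_zero, hpd] at this
  nlinarith [this]

lemma prox_val_ne_top {Gf : E → EReal} {σ : ℝ} (hσ : 0 < σ) {v p : E}
    (hprox : IsProx Gf σ v p) (hbot : ∀ w, Gf w ≠ ⊥) (htop : ∃ w, Gf w ≠ ⊤) :
    ∃ r : ℝ, Gf p = (r : ℝ) := by
  obtain ⟨w, hw⟩ := htop
  have h := hprox w
  rw [EReal.coe_toReal hw (hbot w) |>.symm] at h
  have hlt : (σ : EReal) * Gf p + ((1 / 2 * ‖p - v‖ ^ 2 : ℝ) : EReal) < ⊤ := by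
    refine h.trans_lt ?_
    rw [← EReal.coe_mul, ← EReal.coe_add]
    exact EReal.coe_lt_top _
  have hne : Gf p ≠ ⊤ := by
    intro htop'
    rw [htop', EReal.coe_mul_top_of_pos hσ, EReal.top_add_coe] at hlt
    exact (lt_irrefl _ hlt)
  exact ⟨(Gf p).toReal, (EReal.coe_toReal hne (hbot p)).symm⟩

lemma real_le_of_forall_pos {a b : ℝ} (h : ∀ ε : ℝ, 0 < ε → a ≤ b + ε) : a ≤ b := by
  by_contra hab
  push_neg at hab
  have := h ((a - b)/2) (by linarith)
  linarith

set_option maxHeartbeats 1000000 in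
lemma prox_strong_ineq {Gf : E → EReal} {σ c : ℝ} (hσ : 0 < σ) (hc : 0 ≤ c)
    (hGsc : EConvexOn (fun w => Gf w - ((c / 2 * ‖w‖ ^ 2 : ℝ) : EReal)))
    (hbot : ∀ w, Gf w ≠ ⊥)
    {v p u : E} (hprox : IsProx Gf σ v p) {gp gu : ℝ}
    (hgp : Gf p = (gp : ℝ)) (hgu : Gf u = (gu : ℝ)) :
    σ*gp + 1/2*‖p - v‖^2 + (1 + σ*c)/2*‖u - p‖^2
      ≤ σ*gu + 1/2*‖u - v‖^2 := by
  set X := ‖u - p‖^2 with hX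
  have hXnn : 0 ≤ X := by positivity
  clear_value X
  apply real_le_of_forall_pos
  intro ε hε
  set K := (1 + σ*c)/2 with hK
  have hKnn : 0 ≤ K := by
    have : 0 ≤ σ*c := mul_nonneg hσ.le hc
    rw [hK]; linarith
  clear_value K
  set t := min (1/2 : ℝ) (ε / (K*X + 1)) with ht
  have ht0 : 0 < t := lt_min (by norm_num) (div_pos hε (by nlinarith))
  have ht1 : t < 1 := lt_of_le_of_lt (min_le_left _ _) (by norm_num)
  have htε : t * (K*X) ≤ ε := by
    have h1 : t ≤ ε / (K*X + 1) := min_le_right _ _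
    have h2 : 0 < K*X + 1 := by nlinarith
    have h3 : t*(K*X) ≤ t*(K*X+1) := by nlinarith
    have h4 : t*(K*X+1) ≤ (ε/(K*X+1))*(K*X+1) := mul_le_mul_of_nonneg_right h1 h2.le
    rw [div_mul_cancel₀ _ h2.ne'] at h4
    linarith
  clear_value t
  set wt := (1-t) • p + t • u with hwt
  -- convexity step
  have hconv := hGsc p u (1-t) t (by linarith) ht0.le (by ring)
  simp only at hconv
  rw [hgp, hgu] at hconv
  rw [← hwt] at hconv
  clear_value wt
  set cwt := c / 2 * ‖wt‖ ^ 2 with hcwt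
  clear_value cwt
  set rt0 := (1-t)*(gp - c/2*‖p‖^2) + t*(gu - c/2*‖u‖^2) with hrt0
  clear_value rt0
  have hconv2 : Gf wt - (cwt : EReal) ≤ ((rt0 : ℝ) : EReal) := by
    refine le_trans hconv (le_of_eq ?_)
    rw [hrt0]
    norm_cast
  have h2 : Gf wt ≤ ((rt0 + cwt : ℝ) : EReal) := by
    rw [EReal.coe_add]
    exact (EReal.sub_le_iff_le_add (Or.inl (EReal.coe_ne_bot _))
      (Or.inl (EReal.coe_ne_top _))).1 hconv2
  have hlt : Gf wt < ⊤ := h2.trans_lt (EReal.coe_lt_top _)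
  set gt' := (Gf wt).toReal with hgt'
  clear_value gt'
  have hgt : ((gt' : ℝ) : EReal) = Gf wt := by
    rw [hgt']; exact EReal.coe_toReal hlt.ne (hbot wt)
  have hgtle : gt' ≤ rt0 + cwt := by
    rw [← hgt] at h2
    exact_mod_cast h2
  have h3 := hprox wt
  rw [hgp, ← hgt] at h3
  have hreal : σ*gp + 1/2*‖p - v‖^2 ≤ σ*gt' + 1/2*‖wt - v‖^2 := by
    have := h3
    rw [← EReal.coe_mul, ← EReal.coe_mul, ← EReal.coe_add, ← EReal.coe_add] at this
    exact_mod_cast this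
  have hchain : σ*gp + 1/2*‖p - v‖^2 ≤ σ*(rt0 + cwt) + 1/2*‖wt - v‖^2 := by
    have h4 : σ * gt' ≤ σ * (rt0 + cwt) := mul_le_mul_of_nonneg_left hgtle hσ.le
    linarith
  -- algebra
  have hqwt : 1/2*‖wt - v‖^2
      = (1-t)*(1/2*‖p - v‖^2) + t*(1/2*‖u - v‖^2) - t*(1-t)*(1/2*X) := by
    rw [hwt, hX]
    exact half_norm_combo' p u v t
  have hcwt2 : cwt = (1-t)*(c/2*‖p‖^2) + t*(c/2*‖u‖^2) - t*(1-t)*(c/2*X) := by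
    have h := half_norm_combo' p u 0 t
    simp only [sub_zero] at h
    rw [← hwt] at h
    rw [hcwt, hX]
    linear_combination c * h
  have hmain : σ*gp + 1/2*‖p - v‖^2
      ≤ σ*((1-t)*gp + t*gu - t*(1-t)*(c/2*X))
        + ((1-t)*(1/2*‖p - v‖^2) + t*(1/2*‖u - v‖^2) - t*(1-t)*(1/2*X)) := by
    rw [← hqwt]
    have : rt0 + cwt = (1-t)*gp + t*gu - t*(1-t)*(c/2*X) := by
      rw [hrt0, hcwt2]; ring
    rw [← this]
    exact hchain
  have h5 : σ*gp + 1/2*‖p - v‖^2 + (1-t)*(K*X) ≤ σ*gu + 1/2*‖u - v‖^2 := by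
    have hm' : t*(σ*gp + 1/2*‖p - v‖^2 + (1-t)*(K*X)) ≤ t*(σ*gu + 1/2*‖u - v‖^2) := by
      rw [hK]
      nlinarith [hmain]
    exact le_of_mul_le_mul_left hm' ht0
  have : σ*gp + 1/2*‖p - v‖^2 + K*X ≤ σ*gu + 1/2*‖u - v‖^2 + t*(K*X) := by linarith
  linarith

set_option maxHeartbeats 1000000 in
lemma fb_step {Ff : E → ℝ} {g : E → E} {Gf : E → EReal} {τ L γF γG γ ζ : ℝ}
    (hτ : 0 < τ) (hζ0 : 0 < ζ) (hζ1 : ζ ≤ 1) (hγF : 0 ≤ γF) (hγG : 0 ≤ γG) (hL : 0 ≤ L)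
    (hFconv : ConvexOn ℝ Set.univ Ff) (hFgrad : ∀ w, HasGradientAt Ff (g w) w)
    (hFlip : ∀ w w', ‖g w - g w'‖ ≤ L*‖w - w'‖)
    (hFsc : ConvexOn ℝ Set.univ (fun w => Ff w - γF/2*‖w‖^2))
    (hGsc : EConvexOn (fun w => Gf w - ((γG/2*‖w‖^2 : ℝ) : EReal)))
    (hbot : ∀ w, Gf w ≠ ⊥)
    (hγdef : γ = if 0 < γF then γG + γF - τ*ζ⁻¹*L^2 else γG)
    (hγcase : γF = 0 → τ*L ≤ ζ)
    {z p u : E} (hprox : IsProx Gf τ (z - τ • g z) p)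
    {gp gu : ℝ} (hgp : Gf p = (gp:ℝ)) (hgu : Gf u = (gu:ℝ)) :
    τ*(Ff p + gp) + (1+γ*τ)/2*‖u-p‖^2 + (1-ζ)/2*‖p-z‖^2
      ≤ τ*(Ff u + gu) + 1/2*‖u-z‖^2 := by
  have hI := prox_strong_ineq hτ hγG hGsc hbot hprox hgp hgu
  have hqv : ∀ w : E, 1/2*‖w - (z - τ • g z)‖^2
      = 1/2*‖w-z‖^2 + τ*⟪w-z, g z⟫_ℝ + τ^2*(1/2*‖g z‖^2) := by
    intro w
    rw [show w - (z - τ • g z) = (w - z) + τ • (g z) by module]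
    exact half_norm_add_smul' _ _ _
  rw [hqv p, hqv u] at hI
  by_cases hcase : 0 < γF
  · have hγ' : γ = γG + γF - τ*ζ⁻¹*L^2 := by rw [hγdef, if_pos hcase]
    have hIII := strong_convex_grad_ineq hFsc hFgrad p u
    have hIIIτ := mul_le_mul_of_nonneg_left hIII hτ.le
    have e1 : ⟪u - z, g z⟫_ℝ - ⟪p - z, g z⟫_ℝ
        = ⟪g z - g p, u - p⟫_ℝ + ⟪g p, u - p⟫_ℝ := by
      simp only [inner_sub_left, inner_sub_right]
      rw [real_inner_comm (g z) u, real_inner_comm (g z) p]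
      ring
    have e1τ : τ*⟪u - z, g z⟫_ℝ - τ*⟪p - z, g z⟫_ℝ
        = τ*⟪g z - g p, u - p⟫_ℝ + τ*⟪g p, u - p⟫_ℝ := by linear_combination τ * e1
    have hcs2 : ⟪g z - g p, u - p⟫_ℝ ≤ L*(‖p-z‖*‖u-p‖) := by
      calc ⟪g z - g p, u - p⟫_ℝ ≤ ‖g z - g p‖*‖u-p‖ := real_inner_le_norm _ _
        _ ≤ (L*‖z-p‖)*‖u-p‖ :=
            mul_le_mul_of_nonneg_right (hFlip z p) (norm_nonneg _)
        _ = L*(‖p-z‖*‖u-p‖) := by rw [norm_sub_rev z p]; ring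
    have hcsτ := mul_le_mul_of_nonneg_left hcs2 hτ.le
    have hyoung : τ*(L*(‖p-z‖*‖u-p‖))
        ≤ ζ/2*‖p-z‖^2 + τ^2*ζ⁻¹*L^2/2*‖u-p‖^2 := by
      have h2 : ζ/2*‖p-z‖^2 + τ^2*ζ⁻¹*L^2/2*‖u-p‖^2 - τ*(L*(‖p-z‖*‖u-p‖))
          = (ζ*‖p-z‖ - τ*L*‖u-p‖)^2/(2*ζ) := by
        field_simp
        ring
      have h3 : 0 ≤ (ζ*‖p-z‖ - τ*L*‖u-p‖)^2/(2*ζ) := by positivity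
      linarith [h2 ▸ h3]
    have hcoef : (1+γ*τ)/2*‖u-p‖^2
        = (1+τ*γG+τ*γF)/2*‖u-p‖^2 - τ^2*ζ⁻¹*L^2/2*‖u-p‖^2 := by
      rw [hγ']; ring
    rw [hcoef]
    linarith [hI, hIIIτ, e1τ, hcsτ, hyoung]
  · have hγF0 : γF = 0 := le_antisymm (not_lt.1 hcase) hγF
    have hγ' : γ = γG := by rw [hγdef, if_neg hcase]
    have hτL : τ*L ≤ ζ := hγcase hγF0
    have hFconv' : ConvexOn ℝ Set.univ (fun w => Ff w - (0:ℝ)/2*‖w‖^2) := by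
      simpa using hFconv
    have hIII := strong_convex_grad_ineq hFconv' hFgrad z u
    simp only [zero_div, zero_mul, add_zero] at hIII
    have hIV := descent_lemma_s4 hL hFgrad hFlip z p
    have hIIIτ := mul_le_mul_of_nonneg_left hIII hτ.le
    have hIVτ := mul_le_mul_of_nonneg_left hIV hτ.le
    have c1 : ⟪g z, p - z⟫_ℝ = ⟪p - z, g z⟫_ℝ := real_inner_comm _ _
    have c2 : ⟪g z, u - z⟫_ℝ = ⟪u - z, g z⟫_ℝ := real_inner_comm _ _
    rw [c1] at hIVτ
    rw [c2] at hIIIτ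
    have hzeta : (1-ζ)/2*‖p-z‖^2 ≤ (1-τ*L)/2*‖p-z‖^2 :=
      mul_le_mul_of_nonneg_right (by linarith) (sq_nonneg _)
    rw [hγ']
    nlinarith [hI, hIIIτ, hIVτ, hzeta, hτ.le]

end Helpers

/-- **Dynamic regret bound for predictive online forward–backward splitting
with constant step length** (Corollary 2.6). -/
theorem pofb_dynamic_regret
    {X : ℕ → Type*}
    [∀ k, NormedAddCommGroup (X k)] [∀ k, InnerProductSpace ℝ (X k)]
    [∀ k, CompleteSpace (X k)]
    (F : ∀ k, X k → ℝ) (F' : ∀ k, X k → X k) (G : ∀ k, X k → EReal)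
    (L γF γG γ ζ Λ ε : ℕ → ℝ) (τ : ℝ)
    (hτ : 0 < τ) (hζ : ∀ k, 0 < ζ k ∧ ζ k ≤ 1)
    (hγF : ∀ k, 0 ≤ γF k) (hγG : ∀ k, 0 ≤ γG k) (hL : ∀ k, 0 ≤ L k)
    (hFconv : ∀ k, 1 ≤ k → ConvexOn ℝ Set.univ (F k))
    (hFgrad : ∀ k, 1 ≤ k → ∀ w, HasGradientAt (F k) (F' k w) w)
    (hFlip : ∀ k, 1 ≤ k → ∀ w w', ‖F' k w - F' k w'‖ ≤ L k * ‖w - w'‖)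
    (hFsc : ∀ k, 1 ≤ k → ConvexOn ℝ Set.univ (fun w => F k w - γF k / 2 * ‖w‖ ^ 2))
    (hGconv : ∀ k, 1 ≤ k → EConvexOn (G k))
    (hGproper : ∀ k, 1 ≤ k → (∀ w, G k w ≠ ⊥) ∧ ∃ w, G k w ≠ ⊤)
    (hGlsc : ∀ k, 1 ≤ k → LowerSemicontinuous (G k))
    (hGsc : ∀ k, 1 ≤ k →
      EConvexOn (fun w => G k w - ((γG k / 2 * ‖w‖ ^ 2 : ℝ) : EReal)))
    (hγdef : ∀ k, 1 ≤ k →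
      γ k = if 0 < γF k then γG k + γF k - τ * (ζ k)⁻¹ * L k ^ 2 else γG k)
    (hγcase : ∀ k, 1 ≤ k → γF k = 0 → τ * L k ≤ ζ k)
    (hγpos : ∀ k, 0 ≤ γ k)
    (hΛ : ∀ k, 0 < Λ k)
    (A : ∀ k, X k → X (k + 1))
    (𝓑 : Set (∀ k, X k))
    (h𝓑bdd : ∀ k, Bornology.IsBounded ((fun b => b k) '' 𝓑))
    (x : ∀ k, X k)
    (hstep : ∀ k : ℕ, IsProx (G (k + 1)) τ
      (A k (x k) - τ • F' (k + 1) (A k (x k))) (x (k + 1)))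
    (hpred : ∀ b ∈ 𝓑, ∀ k : ℕ,
      1 / 2 * ‖A k (x k) - b (k + 1)‖ ^ 2 ≤ Λ k / 2 * ‖x k - b k‖ ^ 2 + ε (k + 1))
    (N : ℕ)
    (hΛstep : ∀ k < N, 1 + γ k * τ ≥ Λ k) :
    (⨆ b ∈ 𝓑, ∑ k ∈ Finset.Icc 1 N,
        ((((F k (x k) : ℝ) : EReal) + G k (x k)) -
          (((F k (b k) : ℝ) : EReal) + G k (b k))))
      + ((∑ k ∈ Finset.range N,
          (1 - ζ (k + 1)) / (2 * τ) * ‖x (k + 1) - A k (x k)‖ ^ 2 : ℝ) : EReal)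
    ≤ (⨆ b ∈ 𝓑, (((1 + γ 0 * τ) * ‖x 0 - b 0‖ ^ 2 / (2 * τ) : ℝ) : EReal))
      + ((∑ k ∈ Finset.Icc 1 N, ε k / τ : ℝ) : EReal) := by
  classical
  -- finiteness of G at the iterates
  have hgx' : ∀ k : ℕ, ∃ r : ℝ, G (k+1) (x (k+1)) = (r : ℝ) := fun k =>
    prox_val_ne_top hτ (hstep k) (hGproper (k+1) (Nat.le_add_left 1 k)).1
      (hGproper (k+1) (Nat.le_add_left 1 k)).2
  choose gx hgx using hgx'
  set gxv : ∀ j : ℕ, ℝ := fun j => gx (j - 1) with hgxv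
  set Csum : ℝ := ∑ k ∈ Finset.range N,
      (1 - ζ (k + 1)) / (2 * τ) * ‖x (k + 1) - A k (x k)‖ ^ 2 with hCs
  set Esum : ℝ := ∑ k ∈ Finset.Icc 1 N, ε k / τ with hEs
  set q : (∀ k, X k) → ℝ := fun b => (1 + γ 0 * τ) * ‖x 0 - b 0‖ ^ 2 / (2 * τ) with hq
  have key : ∀ b ∈ 𝓑,
      (∑ k ∈ Finset.Icc 1 N,
        ((((F k (x k) : ℝ) : EReal) + G k (x k)) -
          (((F k (b k) : ℝ) : EReal) + G k (b k))))
      ≤ (⨆ b ∈ 𝓑, (((1 + γ 0 * τ) * ‖x 0 - b 0‖ ^ 2 / (2 * τ) : ℝ) : EReal))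
        + ((Esum - Csum : ℝ) : EReal) := by
    intro b hb
    by_cases htopc : ∃ j ∈ Finset.Icc 1 N, G j (b j) = ⊤
    · obtain ⟨j, hj, hjtop⟩ := htopc
      have hterm : ((((F j (x j) : ℝ) : EReal) + G j (x j)) -
          (((F j (b j) : ℝ) : EReal) + G j (b j))) = ⊥ := by
        rw [hjtop, EReal.coe_add_top, EReal.sub_top]
      rw [← Finset.add_sum_erase _ _ hj, hterm, EReal.bot_add]
      exact bot_le
    · push_neg at htopc
      set gb : ∀ j : ℕ, ℝ := fun j => (G j (b j)).toReal with hgbd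
      have hgb : ∀ j ∈ Finset.Icc 1 N, G j (b j) = ((gb j : ℝ) : EReal) := fun j hj =>
        (EReal.coe_toReal (htopc j hj)
          ((hGproper j (Finset.mem_Icc.1 hj).1).1 (b j))).symm
      -- one-step inequality
      have hstepk : ∀ k, k < N →
          τ*((F (k+1) (x (k+1)) + gxv (k+1)) - (F (k+1) (b (k+1)) + gb (k+1)))
            + (1-ζ (k+1))/2*‖x (k+1) - A k (x k)‖^2
            + (1+γ (k+1)*τ)/2*‖x (k+1) - b (k+1)‖^2
          ≤ (1+γ k*τ)/2*‖x k - b k‖^2 + ε (k+1) := by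
        intro k hk
        have h1 : (1:ℕ) ≤ k+1 := Nat.le_add_left 1 k
        have hbj : G (k+1) (b (k+1)) = ((gb (k+1) : ℝ) : EReal) :=
          hgb (k+1) (Finset.mem_Icc.2 ⟨h1, Nat.succ_le_of_lt hk⟩)
        have hfb := fb_step (E := X (k+1)) hτ (hζ (k+1)).1 (hζ (k+1)).2
          (hγF (k+1)) (hγG (k+1)) (hL (k+1))
          (hFconv _ h1) (hFgrad _ h1) (hFlip _ h1) (hFsc _ h1) (hGsc _ h1)
          ((hGproper _ h1).1) (hγdef _ h1) (hγcase _ h1) (hstep k) (hgx k) hbj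
        have hpr := hpred b hb k
        have hΛk := hΛstep k hk
        have h2 : 1/2*‖b (k+1) - A k (x k)‖^2
            ≤ (1+γ k*τ)/2*‖x k - b k‖^2 + ε (k+1) := by
          rw [norm_sub_rev]
          have h3 := mul_le_mul_of_nonneg_right
            (by linarith : Λ k / 2 ≤ (1+γ k*τ)/2) (sq_nonneg ‖x k - b k‖)
          linarith [hpr]
        have h4 : ‖b (k+1) - x (k+1)‖ = ‖x (k+1) - b (k+1)‖ := norm_sub_rev _ _
        rw [h4] at hfb
        have h5 : gxv (k+1) = gx k := rfl
        rw [h5]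
        linarith [hfb, h2]
      -- telescoping
      have htel : ∀ n, n ≤ N →
          (∑ k ∈ Finset.range n,
            (τ*((F (k+1) (x (k+1)) + gxv (k+1)) - (F (k+1) (b (k+1)) + gb (k+1)))
              + (1-ζ (k+1))/2*‖x (k+1) - A k (x k)‖^2))
            + (1+γ n*τ)/2*‖x n - b n‖^2
          ≤ (1+γ 0*τ)/2*‖x 0 - b 0‖^2 + ∑ k ∈ Finset.range n, ε (k+1) := by
        intro n
        induction n with
        | zero => intro _; simp
        | succ m ih =>
          intro hm
          have hrec := ih (Nat.le_of_succ_le hm)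
          have hst := hstepk m (Nat.lt_of_succ_le hm)
          rw [Finset.sum_range_succ, Finset.sum_range_succ]
          linarith
      have hDN : 0 ≤ (1+γ N*τ)/2*‖x N - b N‖^2 := by
        have h6 : 0 ≤ γ N * τ := mul_nonneg (hγpos N) hτ.le
        have := sq_nonneg ‖x N - b N‖
        nlinarith
      have hreal := htel N le_rfl
      -- real sums
      set Rb : ℝ := ∑ k ∈ Finset.range N,
          ((F (k+1) (x (k+1)) + gxv (k+1)) - (F (k+1) (b (k+1)) + gb (k+1))) with hRb
      have hsplit : (∑ k ∈ Finset.range N,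
            (τ*((F (k+1) (x (k+1)) + gxv (k+1)) - (F (k+1) (b (k+1)) + gb (k+1)))
              + (1-ζ (k+1))/2*‖x (k+1) - A k (x k)‖^2))
          = τ*Rb + ∑ k ∈ Finset.range N, (1-ζ (k+1))/2*‖x (k+1) - A k (x k)‖^2 := by
        rw [hRb, Finset.mul_sum, ← Finset.sum_add_distrib]
      have hτC : τ*Csum = ∑ k ∈ Finset.range N, (1-ζ (k+1))/2*‖x (k+1) - A k (x k)‖^2 := by
        rw [hCs, Finset.mul_sum]
        refine Finset.sum_congr rfl (fun k _ => ?_)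
        field_simp
      have hIccR : ∀ f : ℕ → ℝ, ∑ j ∈ Finset.Icc 1 N, f j
          = ∑ k ∈ Finset.range N, f (k+1) := by
        intro f
        rw [← Finset.Ico_add_one_right_eq_Icc, Finset.sum_Ico_eq_sum_range]
        refine Finset.sum_congr (by norm_num) (fun k _ => by rw [Nat.add_comm 1 k])
      have hτE : τ*Esum = ∑ k ∈ Finset.range N, ε (k+1) := by
        rw [hEs, hIccR (fun j => ε j / τ), Finset.mul_sum]
        refine Finset.sum_congr rfl (fun k _ => ?_)
        field_simp
      have hτq : τ*(q b) = (1+γ 0*τ)/2*‖x 0 - b 0‖^2 := by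
        rw [hq]
        field_simp
      have hfinal : Rb ≤ q b + (Esum - Csum) := by
        have hmul : τ*Rb ≤ τ*(q b + (Esum - Csum)) := by
          rw [mul_add, mul_sub, hτq, hτE, hτC]
          linarith [hreal, hDN, hsplit]
        exact le_of_mul_le_mul_left hmul hτ
      -- EReal conversion
      have hSb : (∑ k ∈ Finset.Icc 1 N,
            ((((F k (x k) : ℝ) : EReal) + G k (x k)) -
              (((F k (b k) : ℝ) : EReal) + G k (b k))))
          = ((Rb : ℝ) : EReal) := by
        have hterm : ∀ j ∈ Finset.Icc 1 N,
            ((((F j (x j) : ℝ) : EReal) + G j (x j)) -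
              (((F j (b j) : ℝ) : EReal) + G j (b j)))
            = (((F j (x j) + gxv j) - (F j (b j) + gb j) : ℝ) : EReal) := by
          intro j hj
          obtain ⟨m, rfl⟩ := Nat.exists_eq_add_of_le (Finset.mem_Icc.1 hj).1
          have hxj : G (1+m) (x (1+m)) = ((gxv (1+m) : ℝ) : EReal) := by
            rw [Nat.add_comm 1 m]
            exact hgx m
          rw [hxj, hgb _ hj]
          norm_cast
        rw [Finset.sum_congr rfl hterm, ← ereal_coe_fsum, hRb, hIccR]
      rw [hSb]
      have h7 : ((Rb : ℝ) : EReal) ≤ ((q b + (Esum - Csum) : ℝ) : EReal) := by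
        exact_mod_cast hfinal
      refine h7.trans ?_
      rw [EReal.coe_add]
      refine add_le_add_left ?_ _
      exact le_iSup₂_of_le b hb (le_refl _)
  have hsup := iSup₂_le key
  calc (⨆ b ∈ 𝓑, ∑ k ∈ Finset.Icc 1 N,
        ((((F k (x k) : ℝ) : EReal) + G k (x k)) -
          (((F k (b k) : ℝ) : EReal) + G k (b k)))) + ((Csum : ℝ) : EReal)
      ≤ ((⨆ b ∈ 𝓑, (((1 + γ 0 * τ) * ‖x 0 - b 0‖ ^ 2 / (2 * τ) : ℝ) : EReal))
          + ((Esum - Csum : ℝ) : EReal)) + ((Csum : ℝ) : EReal) :=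
        add_le_add_left hsup _
    _ = (⨆ b ∈ 𝓑, (((1 + γ 0 * τ) * ‖x 0 - b 0‖ ^ 2 / (2 * τ) : ℝ) : EReal))
          + ((Esum : ℝ) : EReal) := by
        rw [add_assoc, ← EReal.coe_add, sub_add_cancel]
end

section
/- If B = B_X × Y for some nonempty B_X ⊂ X with inf_{x̄∈B_X} [F(x̄) + G(Kx̄)] finite, then G̃ = G, and consequently the partial primal gap reduces to a difference of function values: Ĝ_{B_X×Y}(x) = [F(x) + G(Kx)] − inf_{x̄∈B_X} [F(x̄) + G(Kx̄)] for every x ∈ X. -/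
open scoped InnerProductSpace

noncomputable section

/-- A function is proper: it never takes the value `⊥` and is somewhere finite. -/
def EProper {Z : Type*} (f : Z → EReal) : Prop :=
  (∀ z, f z ≠ ⊥) ∧ ∃ z, f z ≠ ⊤

/-- Coercivity: `f(z) → ∞` as `‖z‖ → ∞`. -/
def ECoercive {Z : Type*} [SeminormedAddCommGroup Z] (f : Z → EReal) : Prop :=
  ∀ C : ℝ, ∃ r : ℝ, ∀ z : Z, r ≤ ‖z‖ → (C : EReal) ≤ f z

open Classical in
/-- The `{0,∞}`-valued indicator function of a set. -/
def indicatorE {Z : Type*} (A : Set Z) (z : Z) : EReal :=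
  if z ∈ A then 0 else ⊤

/-- The Fenchel conjugate of an extended-real-valued function on a real
inner product space. -/
def econj {Z : Type*} [NormedAddCommGroup Z] [InnerProductSpace ℝ Z]
    (f : Z → EReal) (zs : Z) : EReal :=
  ⨆ z : Z, ((⟪z, zs⟫_ℝ : ℝ) : EReal) - f z

variable {X Y : Type*}
  [NormedAddCommGroup X] [InnerProductSpace ℝ X] [CompleteSpace X]
  [NormedAddCommGroup Y] [InnerProductSpace ℝ Y] [CompleteSpace Y]

/-- The Lagrangian `ℒ(x,y) := F(x) + ⟨Kx, y⟩ − G*(y)`. -/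
def lagr (F : X → EReal) (G : Y → EReal) (K : X →L[ℝ] Y) (x : X) (y : Y) : EReal :=
  F x + ((⟪K x, y⟫_ℝ : ℝ) : EReal) - econj G y

/-- The Lagrangian duality gap `𝒢^ℒ(x,y;x̄,ȳ) := ℒ(x,ȳ) − ℒ(x̄,y)`. -/
def lagGap (F : X → EReal) (G : Y → EReal) (K : X →L[ℝ] Y)
    (x : X) (y : Y) (xb : X) (yb : Y) : EReal :=
  lagr F G K x yb - lagr F G K xb y

/-- The partial primal gap `Ĝ_B(x) := sup_{(x̄,ȳ)∈B} inf_y 𝒢^ℒ(x,y;x̄,ȳ)`. -/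
def hatGap (F : X → EReal) (G : Y → EReal) (K : X →L[ℝ] Y)
    (B : Set (X × Y)) (x : X) : EReal :=
  ⨆ p ∈ B, ⨅ y : Y, lagGap F G K x y p.1 p.2

/-- `J_B(x̃,ỹ) := F(x̃) + G(Kx̃) + δ_B(x̃,ỹ)`. -/
def JB (F : X → EReal) (G : Y → EReal) (K : X →L[ℝ] Y)
    (B : Set (X × Y)) (p : X × Y) : EReal :=
  F p.1 + G (K p.1) + indicatorE B p

/-- The Fenchel conjugate of `J_B` on `X × Y`. -/
def JBconj (F : X → EReal) (G : Y → EReal) (K : X →L[ℝ] Y)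
    (B : Set (X × Y)) (q : X × Y) : EReal :=
  ⨆ p : X × Y, ((⟪p.1, q.1⟫_ℝ + ⟪p.2, q.2⟫_ℝ : ℝ) : EReal) - JB F G K B p

/-- `G̃(y') := sup_{x̄,ȳ} (⟨y',ȳ⟩ − G*(ȳ) − J_B(x̄,ȳ)) − J_B*(0,0)`. -/
def Gtilde (F : X → EReal) (G : Y → EReal) (K : X →L[ℝ] Y)
    (B : Set (X × Y)) (y' : Y) : EReal :=
  (⨆ xb : X, ⨆ yb : Y,
      ((⟪y', yb⟫_ℝ : ℝ) : EReal) - econj G yb - JB F G K B (xb, yb))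
    - JBconj F G K B 0


namespace FMaux

lemma ereal_cases (x : EReal) : x = ⊥ ∨ (∃ t : ℝ, x = (t : EReal)) ∨ x = ⊤ := by
  induction x using EReal.rec with
  | bot => exact Or.inl rfl
  | coe t => exact Or.inr (Or.inl ⟨t, rfl⟩)
  | top => exact Or.inr (Or.inr rfl)

lemma ereal_le_of_forall_real_lt {a b : EReal} (h : ∀ r : ℝ, (r:EReal) < a → (r:EReal) ≤ b) :
    a ≤ b := by
  by_contra hc
  push_neg at hc
  obtain ⟨x, hbx, hxa⟩ := EReal.exists_between_coe_real hc
  exact absurd (h x hxa) (not_le.2 hbx)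

lemma const_add_iSup {ι : Sort*} (r : ℝ) (g : ι → EReal) :
    ⨆ i, ((r:EReal) + g i) = (r:EReal) + ⨆ i, g i := by
  refine le_antisymm (iSup_le fun i => add_le_add_right (le_iSup g i) _) ?_
  have h2 : (⨆ i, g i) ≤ ((-r : ℝ):EReal) + ⨆ i, ((r:EReal) + g i) := by
    refine iSup_le fun i => ?_
    have : g i = ((-r:ℝ):EReal) + ((r:EReal) + g i) := by
      rw [← add_assoc, ← EReal.coe_add, neg_add_cancel, EReal.coe_zero, zero_add]
    rw [this]
    exact add_le_add_right (le_iSup (fun i => (r:EReal) + g i) i) _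
  calc (r:EReal) + ⨆ i, g i ≤ (r:EReal) + (((-r:ℝ):EReal) + ⨆ i, ((r:EReal) + g i)) :=
        add_le_add_right h2 _
    _ = ⨆ i, ((r:EReal) + g i) := by
        rw [← add_assoc, ← EReal.coe_add, add_neg_cancel, EReal.coe_zero, zero_add]

lemma iSup_sub_const {ι : Sort*} (g : ι → EReal) (d : ℝ) :
    ⨆ i, (g i - (d:EReal)) = (⨆ i, g i) - (d:EReal) := by
  have h : ∀ x : EReal, x - (d:EReal) = ((-d:ℝ):EReal) + x := fun x => by
    rw [sub_eq_add_neg, EReal.coe_neg, add_comm]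
  simp_rw [h]
  exact const_add_iSup (-d) g

lemma le_sub_const {P A : EReal} {c : ℝ} (h : ∀ d : ℝ, d < c → P ≤ A - (d:EReal)) :
    P ≤ A - (c:EReal) := by
  induction A using EReal.rec with
  | bot =>
      have := h (c-1) (by linarith)
      simpa using this
  | top => exact le_top
  | coe a =>
      by_contra hc
      push_neg at hc
      rw [← EReal.coe_sub] at hc
      obtain ⟨w, h1, h2⟩ := EReal.exists_between_coe_real hc
      have hd : a - w < c := by
        have := EReal.coe_lt_coe_iff.1 h1; linarith
      have := h (a - w) hd
      rw [← EReal.coe_sub] at this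
      have : P ≤ (w:EReal) := by simpa using this
      exact absurd h2 (not_lt.2 this)

lemma sub_const_le {A B : EReal} {c : ℝ} (h : ∀ d : ℝ, c < d → A - (d:EReal) ≤ B) :
    A - (c:EReal) ≤ B := by
  induction A using EReal.rec with
  | bot => rw [EReal.bot_sub]; exact bot_le
  | top =>
      have h1 := h (c+1) (by linarith)
      rw [EReal.top_sub_coe] at h1 ⊢
      exact h1
  | coe a =>
      by_contra hc
      push_neg at hc
      rw [← EReal.coe_sub] at hc
      obtain ⟨w, h1, h2⟩ := EReal.exists_between_coe_real hc
      have hd : c < a - w := by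
        have := EReal.coe_lt_coe_iff.1 h2; linarith
      have := h (a - w) hd
      rw [← EReal.coe_sub] at this
      have : ((w:ℝ):EReal) ≤ B := by simpa using this
      exact absurd h1 (not_lt.2 this)

lemma coe_sub_coe_sub_le (p : ℝ) (x : EReal) : (p:EReal) - ((p:EReal) - x) ≤ x := by
  induction x using EReal.rec with
  | bot => simp
  | top => exact le_top
  | coe t => rw [← EReal.coe_sub, ← EReal.coe_sub]; simp

variable {Z : Type*} [NormedAddCommGroup Z] [InnerProductSpace ℝ Z]

lemma le_econj (f : Z → EReal) (z zs : Z) :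
    ((⟪z, zs⟫_ℝ : ℝ) : EReal) - f z ≤ econj f zs :=
  le_iSup (fun z => ((⟪z, zs⟫_ℝ : ℝ) : EReal) - f z) z

lemma econj_le {f : Z → EReal} {zs : Z} {c : ℝ}
    (h : ∀ z, ((⟪z, zs⟫_ℝ - c : ℝ) : EReal) ≤ f z) : econj f zs ≤ (c : EReal) := by
  refine iSup_le fun z => ?_
  calc ((⟪z, zs⟫_ℝ:ℝ):EReal) - f z
      ≤ ((⟪z, zs⟫_ℝ:ℝ):EReal) - ((⟪z, zs⟫_ℝ - c : ℝ) : EReal) := EReal.sub_le_sub le_rfl (h z)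
    _ = (c : EReal) := by rw [← EReal.coe_sub]; norm_num

lemma biconj_le (f : Z → EReal) (z : Z) : econj (econj f) z ≤ f z := by
  refine iSup_le fun zs => ?_
  calc ((⟪zs, z⟫_ℝ:ℝ):EReal) - econj f zs
      ≤ ((⟪zs, z⟫_ℝ:ℝ):EReal) - (((⟪z, zs⟫_ℝ:ℝ):EReal) - f z) :=
        EReal.sub_le_sub le_rfl (le_econj f z zs)
    _ ≤ f z := by rw [real_inner_comm]; exact coe_sub_coe_sub_le _ _

lemma exists_real_value {f : Z → EReal} (hproper : EProper f) :
    ∃ (z : Z) (t : ℝ), f z = (t : EReal) := by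
  obtain ⟨z, hz⟩ := hproper.2
  rcases ereal_cases (f z) with h | ⟨t, h⟩ | h
  · exact absurd h (hproper.1 z)
  · exact ⟨z, t, h⟩
  · exact absurd h hz

lemma econj_ne_bot {f : Z → EReal} (hproper : EProper f) (zs : Z) : econj f zs ≠ ⊥ := by
  obtain ⟨z1, t1, hz1⟩ := exists_real_value hproper
  have h1 : ((⟪z1, zs⟫_ℝ - t1 : ℝ) : EReal) ≤ econj f zs := by
    have := le_econj f z1 zs
    rw [hz1, ← EReal.coe_sub] at this
    exact this
  intro hc
  rw [hc, le_bot_iff] at h1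
  exact EReal.coe_ne_bot _ h1

variable [CompleteSpace Z]

lemma isClosed_epi {f : Z → EReal} (hlsc : LowerSemicontinuous f) :
    IsClosed {p : Z × ℝ | f p.1 ≤ (p.2 : EReal)} := by
  have h1 : IsClosed {p : Z × EReal | f p.1 ≤ p.2} := hlsc.isClosed_epigraph
  have h2 : {p : Z × ℝ | f p.1 ≤ (p.2 : EReal)} =
      (fun p : Z × ℝ => ((p.1, (p.2 : EReal)) : Z × EReal)) ⁻¹' {p : Z × EReal | f p.1 ≤ p.2} :=
    rfl
  rw [h2]
  exact h1.preimage (continuous_fst.prodMk (continuous_coe_real_ereal.comp continuous_snd))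

lemma convex_epi {f : Z → EReal} (hconv : EConvexOn f) :
    Convex ℝ {p : Z × ℝ | f p.1 ≤ (p.2 : EReal)} := by
  rintro ⟨u, t1⟩ hu ⟨v, t2⟩ hv a b ha hb hab
  simp only [Set.mem_setOf_eq] at hu hv ⊢
  calc f (a • u + b • v) ≤ (a : EReal) * f u + (b : EReal) * f v := hconv u v a b ha hb hab
    _ ≤ (a : EReal) * (t1 : EReal) + (b : EReal) * (t2 : EReal) :=
        add_le_add (mul_le_mul_of_nonneg_left hu (EReal.coe_nonneg.2 ha))
          (mul_le_mul_of_nonneg_left hv (EReal.coe_nonneg.2 hb))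
    _ = ((a * t1 + b * t2 : ℝ) : EReal) := by
        rw [EReal.coe_add, EReal.coe_mul, EReal.coe_mul]

lemma sep {f : Z → EReal} (hconv : EConvexOn f) (hproper : EProper f)
    (hlsc : LowerSemicontinuous f) {z0 : Z} {r : ℝ} (h : (r : EReal) < f z0) :
    ∃ (zs : Z) (s u : ℝ), s ≤ 0 ∧
      (∀ (z : Z) (t : ℝ), f z ≤ (t : EReal) → ⟪z, zs⟫_ℝ + s * t < u) ∧
      u < ⟪z0, zs⟫_ℝ + s * r := by
  have hnot : ((z0, r) : Z × ℝ) ∉ {p : Z × ℝ | f p.1 ≤ (p.2 : EReal)} := by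
    simp only [Set.mem_setOf_eq]; exact not_le.2 h
  obtain ⟨φ, u, hφ, hu⟩ := geometric_hahn_banach_closed_point
    (convex_epi hconv) (isClosed_epi hlsc) hnot
  set L : Z →L[ℝ] ℝ := φ.comp (ContinuousLinearMap.inl ℝ Z ℝ) with hL
  set s : ℝ := φ (0, 1) with hs
  set zs : Z := (InnerProductSpace.toDual ℝ Z).symm L with hzs
  have hdec : ∀ (z : Z) (t : ℝ), φ (z, t) = ⟪z, zs⟫_ℝ + s * t := by
    intro z t
    have h1 : ((z, t) : Z × ℝ) = (z, 0) + t • ((0 : Z), (1 : ℝ)) := by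
      simp [Prod.ext_iff]
    rw [h1, map_add, map_smul]
    have h2 : ⟪z, zs⟫_ℝ = L z := by
      rw [hzs, real_inner_comm]; exact InnerProductSpace.toDual_symm_apply
    simp [h2, hL, smul_eq_mul, mul_comm, hs]
  have hpt : ∀ (z : Z) (t : ℝ), f z ≤ (t : EReal) → ⟪z, zs⟫_ℝ + s * t < u := by
    intro z t hzt
    have := hφ (z, t) hzt
    rwa [hdec] at this
  have hstrict : u < ⟪z0, zs⟫_ℝ + s * r := by
    have := hu; rwa [hdec] at this
  refine ⟨zs, s, u, ?_, hpt, hstrict⟩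
  by_contra hspos
  push_neg at hspos
  obtain ⟨z1, t1, hz1⟩ := exists_real_value hproper
  have hfzT : f z1 ≤ ((max t1 ((u - ⟪z1, zs⟫_ℝ) / s) : ℝ) : EReal) := by
    rw [hz1]; exact EReal.coe_le_coe_iff.2 (le_max_left _ _)
  have h1 := hpt z1 _ hfzT
  have h2 : u - ⟪z1, zs⟫_ℝ ≤ s * max t1 ((u - ⟪z1, zs⟫_ℝ) / s) := by
    have hle : (u - ⟪z1, zs⟫_ℝ) / s ≤ max t1 ((u - ⟪z1, zs⟫_ℝ) / s) := le_max_right _ _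
    calc u - ⟪z1, zs⟫_ℝ = s * ((u - ⟪z1, zs⟫_ℝ) / s) := by field_simp
      _ ≤ s * max t1 ((u - ⟪z1, zs⟫_ℝ) / s) := mul_le_mul_of_nonneg_left hle (le_of_lt hspos)
  linarith

lemma exists_minorant {f : Z → EReal} (hconv : EConvexOn f) (hproper : EProper f)
    (hlsc : LowerSemicontinuous f) :
    ∃ (ws : Z) (cst : ℝ), ∀ z, ((⟪z, ws⟫_ℝ - cst : ℝ) : EReal) ≤ f z := by
  obtain ⟨z1, t1, hz1⟩ := exists_real_value hproper
  have hlt : ((t1 - 1 : ℝ) : EReal) < f z1 := by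
    rw [hz1]; exact EReal.coe_lt_coe_iff.2 (by linarith)
  obtain ⟨zs, s, u, hs, hpt, hstrict⟩ := sep hconv hproper hlsc hlt
  have hsneg : s < 0 := by
    rcases lt_or_eq_of_le hs with h | h
    · exact h
    · exfalso
      have h1 := hpt z1 t1 (le_of_eq hz1)
      rw [h] at h1 hstrict
      simp only [zero_mul, add_zero] at h1 hstrict
      linarith
  refine ⟨(-s⁻¹) • zs, -u / s, fun z => ?_⟩
  rcases ereal_cases (f z) with hfz | ⟨t, hfz⟩ | hfz
  · exact absurd hfz (hproper.1 z)
  · rw [hfz, EReal.coe_le_coe_iff, real_inner_smul_right]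
    have h1 := hpt z t (le_of_eq hfz)
    have h3 : (u - ⟪z, zs⟫_ℝ) / s < t := by
      rw [div_lt_iff_of_neg hsneg]; linarith [mul_comm s t]
    have heq : (u - ⟪z, zs⟫_ℝ) / s = -s⁻¹ * ⟪z, zs⟫_ℝ - -u / s := by
      field_simp; ring
    linarith [heq ▸ h3]
  · rw [hfz]; exact le_top

lemma econj_ne_top_exists {f : Z → EReal} (hconv : EConvexOn f) (hproper : EProper f)
    (hlsc : LowerSemicontinuous f) : ∃ ws, econj f ws ≠ ⊤ := by
  obtain ⟨ws, cst, hmin⟩ := exists_minorant hconv hproper hlsc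
  exact ⟨ws, fun hc => by simpa [hc] using econj_le hmin⟩

/-- **Fenchel–Moreau** -/
theorem biconj_eq {f : Z → EReal} (hconv : EConvexOn f) (hproper : EProper f)
    (hlsc : LowerSemicontinuous f) (z0 : Z) : econj (econj f) z0 = f z0 := by
  refine le_antisymm (biconj_le f z0) ?_
  refine ereal_le_of_forall_real_lt fun r hr => ?_
  obtain ⟨zs, s, u, hs, hpt, hstrict⟩ := sep hconv hproper hlsc hr
  have key : ∃ (ws : Z) (cst : ℝ), (∀ z, ((⟪z, ws⟫_ℝ - cst : ℝ) : EReal) ≤ f z) ∧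
      r < ⟪z0, ws⟫_ℝ - cst := by
    rcases lt_or_eq_of_le hs with hsneg | hszero
    · refine ⟨(-s⁻¹) • zs, -u / s, fun z => ?_, ?_⟩
      · rcases ereal_cases (f z) with hfz | ⟨t, hfz⟩ | hfz
        · exact absurd hfz (hproper.1 z)
        · rw [hfz, EReal.coe_le_coe_iff, real_inner_smul_right]
          have h1 := hpt z t (le_of_eq hfz)
          have h3 : (u - ⟪z, zs⟫_ℝ) / s < t := by
            rw [div_lt_iff_of_neg hsneg]; linarith [mul_comm s t]
          have heq : (u - ⟪z, zs⟫_ℝ) / s = -s⁻¹ * ⟪z, zs⟫_ℝ - -u / s := by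
            field_simp; ring
          linarith [heq ▸ h3]
        · rw [hfz]; exact le_top
      · rw [real_inner_smul_right]
        have h3 : r < (u - ⟪z0, zs⟫_ℝ) / s := by
          rw [lt_div_iff_of_neg hsneg]; linarith [mul_comm s r]
        have heq : (u - ⟪z0, zs⟫_ℝ) / s = -s⁻¹ * ⟪z0, zs⟫_ℝ - -u / s := by
          field_simp; ring
        linarith [heq ▸ h3]
    · -- s = 0
      have hpt0 : ∀ (z : Z) (t : ℝ), f z ≤ (t : EReal) → ⟪z, zs⟫_ℝ < u := by
        intro z t hzt
        have := hpt z t hzt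
        rw [hszero] at this
        simpa using this
      have hstrict0 : u < ⟪z0, zs⟫_ℝ := by
        have := hstrict; rw [hszero] at this; simpa using this
      obtain ⟨ws0, c0, hmin0⟩ := exists_minorant hconv hproper hlsc
      set d : ℝ := ⟪z0, zs⟫_ℝ - u with hd
      have hdpos : 0 < d := by simp [hd]; linarith
      set A : ℝ := ⟪z0, ws0⟫_ℝ - c0 with hA
      set M : ℝ := max 0 ((r - A) / d + 1) with hM
      have hM0 : 0 ≤ M := le_max_left _ _
      refine ⟨ws0 + M • zs, c0 + M * u, fun z => ?_, ?_⟩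
      · rcases ereal_cases (f z) with hfz | ⟨t, hfz⟩ | hfz
        · exact absurd hfz (hproper.1 z)
        · rw [hfz, EReal.coe_le_coe_iff, inner_add_right, real_inner_smul_right]
          have h1 : ⟪z, ws0⟫_ℝ - c0 ≤ t := by
            have := hmin0 z; rw [hfz, EReal.coe_le_coe_iff] at this; exact this
          have h2 : ⟪z, zs⟫_ℝ < u := hpt0 z t (le_of_eq hfz)
          have h3 : M * ⟪z, zs⟫_ℝ ≤ M * u := mul_le_mul_of_nonneg_left (le_of_lt h2) hM0
          linarith
        · rw [hfz]; exact le_top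
      · rw [inner_add_right, real_inner_smul_right]
        have hMQ : (r - A) / d + 1 ≤ M := le_max_right _ _
        have h4 : ((r - A) / d + 1) * d ≤ M * d := mul_le_mul_of_nonneg_right hMQ (le_of_lt hdpos)
        have h5 : ((r - A) / d + 1) * d = (r - A) + d := by
          field_simp
        have h6 : M * d = M * ⟪z0, zs⟫_ℝ - M * u := by rw [hd]; ring
        have : r - A + d ≤ M * ⟪z0, zs⟫_ℝ - M * u := by rw [← h6]; linarith
        have hAeq : A = ⟪z0, ws0⟫_ℝ - c0 := hA
        linarith
  obtain ⟨ws, cst, hmin, hgt⟩ := key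
  have h1 : econj f ws ≤ (cst : EReal) := econj_le hmin
  calc (r : EReal) ≤ ((⟪z0, ws⟫_ℝ - cst : ℝ) : EReal) := EReal.coe_le_coe_iff.2 (le_of_lt hgt)
    _ = ((⟪z0, ws⟫_ℝ : ℝ) : EReal) - (cst : EReal) := EReal.coe_sub _ _
    _ ≤ ((⟪z0, ws⟫_ℝ : ℝ) : EReal) - econj f ws := EReal.sub_le_sub le_rfl h1
    _ ≤ econj (econj f) z0 := by
        rw [real_inner_comm ws z0]; exact le_econj (econj f) ws z0

end FMaux


/-- **Full dual comparison set** (Example 3.2): if `B = B_X × Y` then `G̃ = G`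
and the partial primal gap reduces to a difference of function values. -/
theorem hatGap_prod_univ (F : X → EReal) (G : Y → EReal) (K : X →L[ℝ] Y)
    (BX : Set X)
    (hFconv : EConvexOn F) (hFproper : EProper F) (hFlsc : LowerSemicontinuous F)
    (hGconv : EConvexOn G) (hGproper : EProper G) (hGlsc : LowerSemicontinuous G)
    (hBXne : BX.Nonempty)
    (hfin : ∃ c : ℝ, (⨅ xb ∈ BX, (F xb + G (K xb))) = (c : EReal)) :
    (∀ y' : Y, Gtilde F G K (BX ×ˢ (Set.univ : Set Y)) y' = G y') ∧
    (∀ x : X, hatGap F G K (BX ×ˢ (Set.univ : Set Y)) x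
      = (F x + G (K x)) - ⨅ xb ∈ BX, (F xb + G (K xb))) := by
  obtain ⟨c, hfin⟩ := hfin
  set S : Set (X × Y) := BX ×ˢ (Set.univ : Set Y) with hS
  have hFbot := hFproper.1
  have hGbot := hGproper.1
  have hFM : ∀ v : Y, econj (econj G) v = G v := FMaux.biconj_eq hGconv hGproper hGlsc
  have hbic : ∀ v : Y, (⨆ y : Y, (((⟪v, y⟫_ℝ : ℝ)):EReal) - econj G y) = G v := by
    intro v
    rw [← hFM v]
    unfold econj
    congr 1
    funext y
    rw [real_inner_comm v y]
  have hGconjtop : ∃ ys : Y, econj G ys ≠ ⊤ := FMaux.econj_ne_top_exists hGconv hGproper hGlsc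
  have hsum_ne_bot : ∀ xb : X, F xb + G (K xb) ≠ ⊥ := fun xb => by
    simp [EReal.add_eq_bot_iff, hFbot xb, hGbot (K xb)]
  have hgec : ∀ xb ∈ BX, (c:EReal) ≤ F xb + G (K xb) := by
    intro xb hxb
    rw [← hfin]
    exact iInf₂_le xb hxb
  have happrox : ∀ d : ℝ, c < d → ∃ xb ∈ BX, F xb + G (K xb) < (d:EReal) := by
    intro d hd
    have h1 : (⨅ xb ∈ BX, (F xb + G (K xb))) < (d:EReal) := by
      rw [hfin]; exact EReal.coe_lt_coe_iff.2 hd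
    simpa [iInf_lt_iff] using h1
  have hlagr_eq : ∀ (w : X) (y : Y), lagr F G K w y
      = F w + ((((⟪K w, y⟫_ℝ:ℝ)):EReal) - econj G y) := by
    intro w y
    unfold lagr
    rw [sub_eq_add_neg, add_assoc, ← sub_eq_add_neg]
  have hsupLagr : ∀ w : X, (⨆ y : Y, lagr F G K w y) = F w + G (K w) := by
    intro w
    rcases FMaux.ereal_cases (F w) with hw | ⟨t, hw⟩ | hw
    · exact absurd hw (hFbot w)
    · simp_rw [hlagr_eq, hw, FMaux.const_add_iSup t (fun y : Y => (((⟪K w, y⟫_ℝ:ℝ)):EReal) - econj G y), hbic (K w)]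
    · obtain ⟨ys, hys⟩ := hGconjtop
      have hterm : lagr F G K w ys = ⊤ := by
        rw [hlagr_eq, hw]
        apply EReal.top_add_of_ne_bot
        rw [sub_eq_add_neg]
        simp only [ne_eq, EReal.add_eq_bot_iff, EReal.coe_ne_bot, false_or, EReal.neg_eq_bot_iff]
        exact hys
      have h1 : (⨆ y : Y, lagr F G K w y) = ⊤ :=
        top_le_iff.1 (hterm ▸ le_iSup (lagr F G K w) ys)
      rw [h1, hw, EReal.top_add_of_ne_bot (hGbot (K w))]
  -- hatGap part
  have hat : ∀ x : X, hatGap F G K S x = (F x + G (K x)) - (c:EReal) := by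
    intro x
    refine le_antisymm ?_ ?_
    · refine iSup₂_le ?_
      rintro ⟨xb, yb⟩ hp
      have hxb : xb ∈ BX := hp.1
      have hstep : (⨅ y : Y, lagGap F G K x y xb yb) ≤ lagr F G K x yb - (c:EReal) := by
        apply FMaux.le_sub_const
        intro d hd
        have hdc : (d:EReal) < ⨆ y : Y, lagr F G K xb y := by
          rw [hsupLagr xb]
          exact lt_of_lt_of_le (EReal.coe_lt_coe_iff.2 hd) (hgec xb hxb)
        obtain ⟨y, hy⟩ := lt_iSup_iff.1 hdc
        exact le_trans (iInf_le _ y) (EReal.sub_le_sub le_rfl (le_of_lt hy))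
      refine le_trans hstep (EReal.sub_le_sub ?_ le_rfl)
      rw [← hsupLagr x]
      exact le_iSup (lagr F G K x) yb
    · apply FMaux.sub_const_le
      intro d hd
      obtain ⟨xb, hxb, hxbd⟩ := happrox d hd
      have hub : ∀ y : Y, lagr F G K xb y ≤ (d:EReal) := by
        intro y
        refine le_trans (le_iSup (lagr F G K xb) y) ?_
        rw [hsupLagr xb]
        exact le_of_lt hxbd
      have h1 : ∀ yb : Y, lagr F G K x yb - (d:EReal) ≤ ⨅ y : Y, lagGap F G K x y xb yb :=
        fun yb => le_iInf fun y => EReal.sub_le_sub le_rfl (hub y)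
      calc (F x + G (K x)) - (d:EReal) = (⨆ yb : Y, lagr F G K x yb) - (d:EReal) := by
            rw [hsupLagr x]
        _ = ⨆ yb : Y, (lagr F G K x yb - (d:EReal)) := (FMaux.iSup_sub_const _ d).symm
        _ ≤ ⨆ yb : Y, ⨅ y : Y, lagGap F G K x y xb yb := iSup_mono h1
        _ ≤ hatGap F G K S x :=
            iSup_le fun yb => le_iSup₂_of_le ((xb, yb) : X × Y) ⟨hxb, trivial⟩ le_rfl
  -- JB facts
  have hJBmem : ∀ xb ∈ BX, ∀ yb : Y, JB F G K S ((xb, yb) : X × Y) = F xb + G (K xb) := by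
    intro xb hxb yb
    unfold JB indicatorE
    simp [hS, Set.mem_prod, hxb]
  have hJBc : ∀ p : X × Y, (c:EReal) ≤ JB F G K S p := by
    intro p
    by_cases hp : p ∈ S
    · unfold JB indicatorE
      rw [if_pos hp, add_zero]
      exact hgec p.1 hp.1
    · unfold JB indicatorE
      rw [if_neg hp, EReal.add_top_of_ne_bot (hsum_ne_bot p.1)]
      exact le_top
  -- JBconj at 0
  have hJBconj : JBconj F G K S 0 = ((-c:ℝ):EReal) := by
    unfold JBconj
    have hzero : ∀ p : X × Y,
        ((⟪p.1, (0 : X × Y).1⟫_ℝ + ⟪p.2, (0 : X × Y).2⟫_ℝ : ℝ) : EReal) = ((0:ℝ):EReal) := by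
      intro p
      simp
    refine le_antisymm (iSup_le fun p => ?_) ?_
    · rw [hzero p]
      calc ((0:ℝ):EReal) - JB F G K S p ≤ ((0:ℝ):EReal) - (c:EReal) :=
            EReal.sub_le_sub le_rfl (hJBc p)
        _ = ((-c:ℝ):EReal) := by rw [← EReal.coe_sub]; norm_num
    · have heq : ((-c:ℝ):EReal) = ((0:ℝ):EReal) - (c:EReal) := by
        rw [← EReal.coe_sub]; norm_num
      rw [heq]
      apply FMaux.sub_const_le
      intro d hd
      obtain ⟨xb, hxb, hxbd⟩ := happrox d hd
      refine le_trans ?_ (le_iSup _ ((xb, 0) : X × Y))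
      rw [hzero ((xb, 0) : X × Y), hJBmem xb hxb 0]
      exact EReal.sub_le_sub le_rfl (le_of_lt hxbd)
  -- Gtilde part
  have hGt : ∀ y' : Y, Gtilde F G K S y' = G y' := by
    intro y'
    have hT : (⨆ xb : X, ⨆ yb : Y,
        (((⟪y', yb⟫_ℝ:ℝ)):EReal) - econj G yb - JB F G K S ((xb, yb) : X × Y))
        = G y' - (c:EReal) := by
      refine le_antisymm (iSup_le fun xb => iSup_le fun yb => ?_) ?_
      · calc (((⟪y', yb⟫_ℝ:ℝ)):EReal) - econj G yb - JB F G K S ((xb, yb) : X × Y)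
            ≤ ((((⟪y', yb⟫_ℝ:ℝ)):EReal) - econj G yb) - (c:EReal) :=
              EReal.sub_le_sub le_rfl (hJBc _)
          _ ≤ (⨆ yb : Y, ((((⟪y', yb⟫_ℝ:ℝ)):EReal) - econj G yb)) - (c:EReal) :=
              EReal.sub_le_sub (le_iSup (fun yb : Y => (((⟪y', yb⟫_ℝ:ℝ)):EReal) - econj G yb) yb) le_rfl
          _ = G y' - (c:EReal) := by rw [hbic y']
      · apply FMaux.sub_const_le
        intro d hd
        obtain ⟨xb, hxb, hxbd⟩ := happrox d hd
        have h1 : ∀ yb : Y, (((⟪y', yb⟫_ℝ:ℝ)):EReal) - econj G yb - (d:EReal)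
            ≤ (((⟪y', yb⟫_ℝ:ℝ)):EReal) - econj G yb - JB F G K S ((xb, yb) : X × Y) := by
          intro yb
          refine EReal.sub_le_sub le_rfl ?_
          rw [hJBmem xb hxb yb]
          exact le_of_lt hxbd
        calc G y' - (d:EReal)
            = (⨆ yb : Y, ((((⟪y', yb⟫_ℝ:ℝ)):EReal) - econj G yb)) - (d:EReal) := by rw [hbic y']
          _ = ⨆ yb : Y, ((((⟪y', yb⟫_ℝ:ℝ)):EReal) - econj G yb - (d:EReal)) :=
              (FMaux.iSup_sub_const _ d).symm
          _ ≤ ⨆ yb : Y, ((((⟪y', yb⟫_ℝ:ℝ)):EReal) - econj G yb - JB F G K S ((xb, yb) : X × Y)) :=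
              iSup_mono h1
          _ ≤ ⨆ xb : X, ⨆ yb : Y,
              ((((⟪y', yb⟫_ℝ:ℝ)):EReal) - econj G yb - JB F G K S ((xb, yb) : X × Y)) :=
              le_iSup (fun xb : X => ⨆ yb : Y,
                ((((⟪y', yb⟫_ℝ:ℝ)):EReal) - econj G yb - JB F G K S ((xb, yb) : X × Y))) xb
    unfold Gtilde
    rw [hT, hJBconj, sub_eq_add_neg, ← EReal.coe_neg, neg_neg, sub_eq_add_neg, add_assoc,
      ← EReal.coe_neg, ← EReal.coe_add, neg_add_cancel, EReal.coe_zero, add_zero]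
  exact ⟨hGt, fun x => by rw [hat x, hfin]⟩

end
end

section
/- Upper bound G̃ ≤ G. Let X and Y be real Hilbert spaces, F : X → (−∞,∞] and G : Y → (−∞,∞] convex, proper, and lower semicontinuous, K : X → Y bounded linear, and B ⊂ X×Y such that inf_{(x̃,ỹ)∈X×Y} J_B(x̃,ỹ) is finite. Then G̃(y') ≤ G(y') for every y' ∈ Y. -/
open scoped InnerProductSpace

noncomputable section

variable {X Y : Type*}
  [NormedAddCommGroup X] [InnerProductSpace ℝ X] [CompleteSpace X]
  [NormedAddCommGroup Y] [InnerProductSpace ℝ Y] [CompleteSpace Y]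

/-- **Upper bound `G̃ ≤ G`**: since `−J_B*(0,0) ≤ J_B(x̄,ȳ)` whenever
`inf J_B` is finite. -/
theorem Gtilde_le (F : X → EReal) (G : Y → EReal) (K : X →L[ℝ] Y)
    (B : Set (X × Y))
    (hFconv : EConvexOn F) (hFproper : EProper F) (hFlsc : LowerSemicontinuous F)
    (hGconv : EConvexOn G) (hGproper : EProper G) (hGlsc : LowerSemicontinuous G)
    (hfin : ∃ c : ℝ, (⨅ p : X × Y, JB F G K B p) = (c : EReal))
    (y' : Y) :
    Gtilde F G K B y' ≤ G y' := by
  obtain ⟨c, hc⟩ := hfin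
  have hGy : G y' ≠ ⊥ := hGproper.1 y'
  have hconj_ne_bot : ∀ yb : Y, econj G yb ≠ ⊥ := by
    intro yb
    obtain ⟨z, hz⟩ := hGproper.2
    have hzb : G z ≠ ⊥ := hGproper.1 z
    obtain ⟨r, hr⟩ : ∃ r : ℝ, G z = (r : EReal) := by
      cases hGz : G z with
      | bot => exact absurd hGz hzb
      | top => exact absurd hGz hz
      | coe r => exact ⟨r, rfl⟩
    have hle : ((⟪z, yb⟫_ℝ : ℝ) : EReal) - G z ≤ econj G yb :=
      le_iSup (fun w => ((⟪w, yb⟫_ℝ : ℝ) : EReal) - G w) z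
    intro hbot
    rw [hbot, le_bot_iff, hr, ← EReal.coe_sub] at hle
    exact EReal.coe_ne_bot _ hle
  have h1 : ∀ yb : Y, ((⟪y', yb⟫_ℝ : ℝ) : EReal) - econj G yb ≤ G y' := by
    intro yb
    have hle : ((⟪y', yb⟫_ℝ : ℝ) : EReal) - G y' ≤ econj G yb :=
      le_iSup (fun w => ((⟪w, yb⟫_ℝ : ℝ) : EReal) - G w) y'
    cases hs : econj G yb with
    | bot => exact absurd hs (hconj_ne_bot yb)
    | top => rw [EReal.sub_top]; exact bot_le
    | coe r =>
      rw [hs] at hle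
      cases hg : G y' with
      | bot => exact absurd hg hGy
      | top => exact le_top
      | coe g =>
        rw [hg, ← EReal.coe_sub, EReal.coe_le_coe_iff] at hle
        rw [← EReal.coe_sub, EReal.coe_le_coe_iff]
        linarith
  have hterm : ∀ (xb : X) (yb : Y),
      ((⟪y', yb⟫_ℝ : ℝ) : EReal) - econj G yb - JB F G K B (xb, yb)
        ≤ G y' - (c : EReal) := by
    intro xb yb
    have h2 : (c : EReal) ≤ JB F G K B (xb, yb) := by
      rw [← hc]; exact iInf_le _ _
    have h3 : -(JB F G K B (xb, yb)) ≤ -(c : EReal) := EReal.neg_le_neg_iff.2 h2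
    calc ((⟪y', yb⟫_ℝ : ℝ) : EReal) - econj G yb - JB F G K B (xb, yb)
        = (((⟪y', yb⟫_ℝ : ℝ) : EReal) - econj G yb) + (-(JB F G K B (xb, yb))) :=
          sub_eq_add_neg _ _
      _ ≤ G y' + (-(c : EReal)) := add_le_add (h1 yb) h3
      _ = G y' - (c : EReal) := (sub_eq_add_neg _ _).symm
  have hS : (⨆ xb : X, ⨆ yb : Y,
      ((⟪y', yb⟫_ℝ : ℝ) : EReal) - econj G yb - JB F G K B (xb, yb))
        ≤ G y' - (c : EReal) :=
    iSup_le fun xb => iSup_le fun yb => hterm xb yb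
  have hJ : -(c : EReal) ≤ JBconj F G K B 0 := by
    rw [← hc, EReal.neg_le]
    refine le_iInf fun p => ?_
    rw [EReal.neg_le]
    have he : ((⟪p.1, (0 : X × Y).1⟫_ℝ + ⟪p.2, (0 : X × Y).2⟫_ℝ : ℝ) : EReal) - JB F G K B p
        = -(JB F G K B p) := by
      simp [sub_eq_add_neg]
    calc -(JB F G K B p)
        = ((⟪p.1, (0 : X × Y).1⟫_ℝ + ⟪p.2, (0 : X × Y).2⟫_ℝ : ℝ) : EReal) - JB F G K B p :=
          he.symm
      _ ≤ JBconj F G K B 0 :=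
          le_iSup (fun q : X × Y =>
            ((⟪q.1, (0 : X × Y).1⟫_ℝ + ⟪q.2, (0 : X × Y).2⟫_ℝ : ℝ) : EReal) - JB F G K B q) p
  have hJ' : -(JBconj F G K B 0) ≤ (c : EReal) := by
    rw [← neg_neg ((c : ℝ) : EReal)]
    exact EReal.neg_le_neg_iff.2 hJ
  calc Gtilde F G K B y'
      = (⨆ xb : X, ⨆ yb : Y,
          ((⟪y', yb⟫_ℝ : ℝ) : EReal) - econj G yb - JB F G K B (xb, yb))
        + (-(JBconj F G K B 0)) := sub_eq_add_neg _ _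
    _ ≤ (G y' - (c : EReal)) + (c : EReal) := add_le_add hS hJ'
    _ = G y' := EReal.sub_add_cancel

end
end
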